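/- arXiv:1305.6208 — 7 statements merged into one kernel-verified Lean document; each statement's English description precedes it below -/
import Mathlib

section
/- Let (X,μ) be a nonatomic probability space, T a tree on X, q ∈ (0,1), and f, h, L real numbers with 0 < h ≤ f^q and L ≥ f. Set c = ω_q( ((1−q)L^q + q L^{q−1} f) / h ). Let φ_n : X → [0,∞) be measurable functions with ∫_X φ_n dμ = f and ∫_X φ_n^q dμ = h for every n. Then the following are equivalent: (i) lim_n ∫_X [max(M_T φ_n, L)]^q dμ = h·c; (ii) lim_n ∫_X | max(M_T φ_n, L) − c^{1/q} φ_n |^q dμ = 0. -/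
open MeasureTheory Filter Set

noncomputable section

/-- A tree on a probability space, as in the paper. -/
structure DTree (X : Type*) [MeasurableSpace X] (μ : Measure X) where
  mem : Set (Set X)
  child : Set X → Set (Set X)
  meas : ∀ I ∈ mem, MeasurableSet I
  top_mem : Set.univ ∈ mem
  pos : ∀ I ∈ mem, 0 < μ I
  child_sub_mem : ∀ I ∈ mem, child I ⊆ mem
  child_countable : ∀ I ∈ mem, (child I).Countable
  child_two : ∀ I ∈ mem, ∃ J ∈ child I, ∃ K ∈ child I, J ≠ K
  child_sub : ∀ I ∈ mem, ∀ J ∈ child I, J ⊆ I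
  child_disj : ∀ I ∈ mem, (child I).Pairwise Disjoint
  child_union : ∀ I ∈ mem, ⋃₀ child I = I
  generated : ∃ lvl : ℕ → Set (Set X),
    lvl 0 = {Set.univ} ∧
    (∀ m, lvl (m + 1) = ⋃ I ∈ lvl m, child I) ∧
    mem = ⋃ m, lvl m ∧
    Tendsto (fun m => ⨆ I ∈ lvl m, μ I) atTop (nhds 0)

variable {X : Type*} [MeasurableSpace X]

/-- The average of `φ` over `I`. -/
def trAvg (μ : Measure X) (φ : X → ℝ) (I : Set X) : ℝ :=
  (μ I).toReal⁻¹ * ∫ x in I, φ x ∂μ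

/-- The dyadic maximal operator associated with the tree `T`. -/
def trMax (μ : Measure X) (T : DTree X μ) (φ : X → ℝ) (x : X) : ℝ :=
  sSup {r : ℝ | ∃ I ∈ T.mem, x ∈ I ∧ r = trAvg μ (fun y => |φ y|) I}

/-- The exceptional set `A_φ`. -/
def trBad (μ : Measure X) (T : DTree X μ) (φ : X → ℝ) : Set X :=
  {x | ∀ I ∈ T.mem, x ∈ I → trAvg μ φ I < trMax μ T φ x}

/-- `φ` is `T`-good if the exceptional set `A_φ` is null. -/
def TGood (μ : Measure X) (T : DTree X μ) (φ : X → ℝ) : Prop :=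
  μ (trBad μ T φ) = 0

/-- The set `A(φ, I) = {x ∈ X \ A_φ : I_φ(x) = I}`, where `I_φ(x)` is the largest
element `I` of the tree with `x ∈ I` and `M_T φ x = Av_I(φ)`. -/
def trA (μ : Measure X) (T : DTree X μ) (φ : X → ℝ) (I : Set X) : Set X :=
  {x | x ∉ trBad μ T φ ∧ I ∈ T.mem ∧ x ∈ I ∧ trMax μ T φ x = trAvg μ φ I ∧
    ∀ J ∈ T.mem, x ∈ J → trMax μ T φ x = trAvg μ φ J → J ⊆ I}

/-- The subtree `S_φ`. -/
def trS (μ : Measure X) (T : DTree X μ) (φ : X → ℝ) : Set (Set X) :=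
  {I | I ∈ T.mem ∧ 0 < μ (trA μ T φ I)} ∪ {Set.univ}

/-- `J* = I` : `I` is the smallest element of `S_φ` properly containing `J`. -/
def IsStarOf (μ : Measure X) (T : DTree X μ) (φ : X → ℝ) (J I : Set X) : Prop :=
  I ∈ trS μ T φ ∧ J ⊂ I ∧ ∀ K ∈ trS μ T φ, J ⊂ K → I ⊆ K

/-- `H_q(z) = (1-q) z^q + q z^(q-1)`. -/
def funH (q z : ℝ) : ℝ := (1 - q) * z ^ q + q * z ^ (q - 1)

/-- `ω_q(z) = (H_q⁻¹(z))^q`, with `H_q⁻¹` the inverse of `H_q : [1,∞) → [1,∞)`. -/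
def funOmega (q z : ℝ) : ℝ := (Function.invFunOn (funH q) (Set.Ici 1) z) ^ q

/-- The constant `c = ω_q(((1-q)L^q + qL^(q-1)f)/h)`. -/
def bellC (q f h L : ℝ) : ℝ := funOmega q (((1 - q) * L ^ q + q * L ^ (q - 1) * f) / h)

/-- An extremal sequence for the Bellman function of three variables. -/
def IsExtremal (μ : Measure X) (T : DTree X μ) (q f h L : ℝ) (φ : ℕ → X → ℝ) : Prop :=
  (∀ n x, 0 ≤ φ n x) ∧ (∀ n, Measurable (φ n)) ∧ (∀ n, Integrable (φ n) μ) ∧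
  (∀ n, ∫ x, φ n x ∂μ = f) ∧ (∀ n, ∫ x, φ n x ^ q ∂μ = h) ∧
  Tendsto (fun n => ∫ x, (max (trMax μ T (φ n) x) L) ^ q ∂μ) atTop
    (nhds (bellC q f h L * h))

namespace Stmt1Aux

variable {X : Type*} [MeasurableSpace X] {μ : Measure X}


variable {q : ℝ}

/-- Tangent-line (weighted AM-GM) inequality for concave rpow. -/
lemma amgm (hq0 : 0 < q) (hq1 : q < 1) {r κ : ℝ} (hr : 0 ≤ r) (hκ : 0 < κ) :
    r ^ q ≤ q * κ ^ (q - 1) * r + (1 - q) * κ ^ q := by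
  have key := Real.geom_mean_le_arith_mean2_weighted (w₁ := q) (w₂ := 1 - q)
    (p₁ := κ ^ (q - 1) * r) (p₂ := κ ^ q) hq0.le (by linarith)
    (mul_nonneg (Real.rpow_nonneg hκ.le _) hr) (Real.rpow_nonneg hκ.le (q : ℝ)) (by ring)
  have e1 : (κ ^ (q - 1) * r) ^ q * (κ ^ q) ^ (1 - q) = r ^ q * κ ^ ((q - 1) * q + q * (1 - q)) := by
    rw [Real.mul_rpow (Real.rpow_nonneg hκ.le _) hr, ← Real.rpow_mul hκ.le,
      ← Real.rpow_mul hκ.le, Real.rpow_add hκ]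
    ring
  have e2 : (q - 1) * q + q * (1 - q) = 0 := by ring
  calc r ^ q = (κ ^ (q - 1) * r) ^ q * (κ ^ q) ^ (1 - q) := by
        rw [e1, e2, Real.rpow_zero, mul_one]
    _ ≤ q * (κ ^ (q - 1) * r) + (1 - q) * κ ^ q := key
    _ = q * κ ^ (q - 1) * r + (1 - q) * κ ^ q := by ring

lemma rpow_subadd (hq0 : 0 < q) (hq1 : q < 1) {a b : ℝ} (ha : 0 ≤ a) (hb : 0 ≤ b) :
    (a + b) ^ q ≤ a ^ q + b ^ q := by
  have key := NNReal.rpow_add_le_add_rpow a.toNNReal b.toNNReal hq0.le hq1.le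
  rw [← Real.toNNReal_add ha hb] at key
  have h2 := NNReal.coe_le_coe.2 key
  push_cast at h2
  rwa [Real.coe_toNNReal _ (add_nonneg ha hb), Real.coe_toNNReal _ ha,
    Real.coe_toNNReal _ hb] at h2

lemma abs_rpow_sub_le_aux (hq0 : 0 < q) (hq1 : q < 1) {a b : ℝ} (hb : 0 ≤ b) (hba : b ≤ a) :
    |a ^ q - b ^ q| ≤ |a - b| ^ q := by
  have h1 : a ^ q - b ^ q ≤ (a - b) ^ q := by
    have h := rpow_subadd hq0 hq1 (sub_nonneg.2 hba) hb
    rw [sub_add_cancel] at h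
    linarith
  have h2 : 0 ≤ a ^ q - b ^ q := sub_nonneg.2 (Real.rpow_le_rpow hb hba hq0.le)
  rw [abs_of_nonneg h2, abs_of_nonneg (sub_nonneg.2 hba)]
  exact h1

lemma abs_rpow_sub_le (hq0 : 0 < q) (hq1 : q < 1) {a b : ℝ} (ha : 0 ≤ a) (hb : 0 ≤ b) :
    |a ^ q - b ^ q| ≤ |a - b| ^ q := by
  rcases le_total b a with hba | hab
  · exact abs_rpow_sub_le_aux hq0 hq1 hb hba
  · rw [abs_sub_comm, abs_sub_comm a b]
    exact abs_rpow_sub_le_aux hq0 hq1 ha hab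

/-- The function controlling the stability estimate. -/
def gfun (q w : ℝ) : ℝ := q * w + (1 - q) - w ^ q

lemma gfun_nonneg (hq0 : 0 < q) (hq1 : q < 1) {w : ℝ} (hw : 0 ≤ w) : 0 ≤ gfun q w := by
  have h := amgm hq0 hq1 hw one_pos
  simp only [Real.one_rpow, mul_one] at h
  unfold gfun
  nlinarith [h]

lemma gfun_one : gfun q 1 = 0 := by simp [gfun]

lemma gfun_contOn (hq0 : 0 < q) : ContinuousOn (gfun q) (Set.Icc (0:ℝ) 1) := by
  apply continuousOn_of_forall_continuousAt
  intro w _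
  have h1 : ContinuousAt (fun w : ℝ => w ^ q) w :=
    Real.continuousAt_rpow_const w q (Or.inr hq0.le)
  exact ((continuousAt_const.mul continuousAt_id).add continuousAt_const).sub h1

lemma gfun_anti (hq0 : 0 < q) (hq1 : q < 1) : StrictAntiOn (gfun q) (Set.Icc (0:ℝ) 1) := by
  apply strictAntiOn_of_deriv_neg (convex_Icc 0 1) (gfun_contOn hq0)
  intro w hw
  rw [interior_Icc] at hw
  have hw0 : 0 < w := hw.1
  have hd : HasDerivAt (gfun q) (q - q * w ^ (q - 1)) w := by
    have h1 : HasDerivAt (fun w : ℝ => q * w + (1 - q)) q w := by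
      simpa using ((hasDerivAt_id w).const_mul q).add_const (1 - q)
    have h2 : HasDerivAt (fun w : ℝ => w ^ q) (q * w ^ (q - 1)) w :=
      Real.hasDerivAt_rpow_const (Or.inl hw0.ne')
    exact h1.sub h2
  rw [hd.deriv]
  have hgt : 1 < w ^ (q - 1) :=
    (Real.one_lt_rpow_iff_of_pos hw0).2 (Or.inr ⟨hw.2, by linarith⟩)
  nlinarith

lemma gfun_mono (hq0 : 0 < q) (hq1 : q < 1) : StrictMonoOn (gfun q) (Set.Ici (1:ℝ)) := by
  apply strictMonoOn_of_deriv_pos (convex_Ici 1)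
  · apply continuousOn_of_forall_continuousAt
    intro w hw
    have h1 : ContinuousAt (fun w : ℝ => w ^ q) w :=
      Real.continuousAt_rpow_const w q (Or.inl (by rw [Set.mem_Ici] at hw; positivity))
    exact ((continuousAt_const.mul continuousAt_id).add continuousAt_const).sub h1
  · intro w hw
    rw [interior_Ici] at hw
    have hw1 : 1 < w := hw
    have hd : HasDerivAt (gfun q) (q - q * w ^ (q - 1)) w := by
      have h1 : HasDerivAt (fun w : ℝ => q * w + (1 - q)) q w := by
        simpa using ((hasDerivAt_id w).const_mul q).add_const (1 - q)
      have h2 : HasDerivAt (fun w : ℝ => w ^ q) (q * w ^ (q - 1)) w :=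
        Real.hasDerivAt_rpow_const (Or.inl (by positivity))
      exact h1.sub h2
    rw [hd.deriv]
    have hlt : w ^ (q - 1) < 1 :=
      Real.rpow_lt_one_of_one_lt_of_neg hw1 (by linarith)
    nlinarith

lemma gfun_pos_of_lt (hq0 : 0 < q) (hq1 : q < 1) {w : ℝ} (hw0 : 0 ≤ w) (hw : w < 1) :
    0 < gfun q w := by
  have := gfun_anti hq0 hq1 ⟨hw0, hw.le⟩ ⟨zero_le_one, le_rfl⟩ hw
  rwa [gfun_one] at this

lemma gfun_pos_of_gt (hq0 : 0 < q) (hq1 : q < 1) {w : ℝ} (hw : 1 < w) :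
    0 < gfun q w := by
  have := gfun_mono hq0 hq1 (Set.self_mem_Ici) (Set.mem_Ici.2 hw.le) hw
  rwa [gfun_one] at this


lemma exists_gbound (hq0 : 0 < q) (hq1 : q < 1) {eps : ℝ} (heps : 0 < eps) :
    ∃ C : ℝ, 0 < C ∧ ∀ w : ℝ, 0 ≤ w → |1 - w| ^ q ≤ eps + C * gfun q w := by
  set dl : ℝ := min (eps ^ (1 / q)) (1 / 2) with hdldef
  have hdl0 : 0 < dl := lt_min (Real.rpow_pos_of_pos heps _) (by norm_num)
  have hdlhalf : dl ≤ 1 / 2 := min_le_right _ _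
  have hdleps : dl ^ q ≤ eps := by
    calc dl ^ q ≤ (eps ^ (1 / q)) ^ q := Real.rpow_le_rpow hdl0.le (min_le_left _ _) hq0.le
      _ = eps := by rw [← Real.rpow_mul heps.le, one_div_mul_cancel hq0.ne', Real.rpow_one]
  set W : ℝ := max 2 ((q / 2) ^ (1 / (q - 1))) with hWdef
  have hW2 : (2 : ℝ) ≤ W := le_max_left _ _
  have hW1 : (1 : ℝ) ≤ W := by linarith
  have hWpos : (0 : ℝ) < W := by linarith
  have hq2 : 0 < q / 2 := by linarith
  -- tail bound
  have tail : ∀ w : ℝ, W ≤ w → |1 - w| ^ q ≤ (2 / q) * gfun q w := by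
    intro w hWw
    have hw1 : 1 ≤ w := le_trans hW1 hWw
    have hwpos : 0 < w := by linarith
    have h1 : w ^ (q - 1) ≤ q / 2 := by
      have e : ((q / 2) ^ (1 / (q - 1))) ^ (q - 1) = q / 2 := by
        rw [← Real.rpow_mul hq2.le, one_div_mul_cancel (by intro hc; rw [sub_eq_zero] at hc; linarith),
          Real.rpow_one]
      calc w ^ (q - 1) ≤ ((q / 2) ^ (1 / (q - 1))) ^ (q - 1) :=
            Real.rpow_le_rpow_of_nonpos (Real.rpow_pos_of_pos hq2 _)
              (le_trans (le_max_right _ _) hWw) (by linarith)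
        _ = q / 2 := e
    have h2 : w ^ q = w ^ (q - 1) * w := by
      rw [← Real.rpow_add_one hwpos.ne' (q - 1), sub_add_cancel]
    have hgw : (q / 2) * w ≤ gfun q w := by
      have : w ^ q ≤ (q / 2) * w := by
        rw [h2]; exact mul_le_mul_of_nonneg_right h1 hwpos.le
      unfold gfun; nlinarith
    have habs : |1 - w| ^ q ≤ w := by
      have e1 : |1 - w| = w - 1 := by rw [abs_of_nonpos (by linarith)]; ring
      rw [e1]
      calc (w - 1) ^ q ≤ w ^ q := Real.rpow_le_rpow (by linarith) (by linarith) hq0.le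
        _ ≤ w ^ (1 : ℝ) := Real.rpow_le_rpow_of_exponent_le hw1 hq1.le
        _ = w := Real.rpow_one w
    calc |1 - w| ^ q ≤ w := habs
      _ ≤ (2 / q) * gfun q w := by
          have h4 : (2 / q) * gfun q w = 2 * gfun q w / q := by ring
          rw [h4, le_div_iff₀ hq0]
          linarith
  -- middle bound
  have hm1 : 0 < gfun q (1 - dl) := gfun_pos_of_lt hq0 hq1 (by linarith) (by linarith)
  have hm2 : 0 < gfun q (1 + dl) := gfun_pos_of_gt hq0 hq1 (by linarith)
  set m : ℝ := min (gfun q (1 - dl)) (gfun q (1 + dl)) with hmdef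
  have hm : 0 < m := lt_min hm1 hm2
  set C : ℝ := max (2 / q) ((1 + W) / m) with hCdef
  have hC0 : 0 < C := lt_of_lt_of_le (by positivity) (le_max_left _ _)
  refine ⟨C, hC0, ?_⟩
  intro w hw
  have hgnn : 0 ≤ gfun q w := gfun_nonneg hq0 hq1 hw
  by_cases hnear : |1 - w| ≤ dl
  · have : |1 - w| ^ q ≤ dl ^ q := Real.rpow_le_rpow (abs_nonneg _) hnear hq0.le
    nlinarith
  push_neg at hnear
  by_cases htail : W ≤ w
  · have h := tail w htail
    have : (2 / q) * gfun q w ≤ C * gfun q w :=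
      mul_le_mul_of_nonneg_right (le_max_left _ _) hgnn
    linarith
  push_neg at htail
  -- middle region
  have hgm : m ≤ gfun q w := by
    rcases le_or_gt w 1 with hwle | hwgt
    · have hwd : w ≤ 1 - dl := by
        rcases abs_cases (1 - w) with ⟨he, _⟩ | ⟨he, _⟩
        · linarith
        · linarith
      have : gfun q (1 - dl) ≤ gfun q w := by
        rcases eq_or_lt_of_le hwd with he | hlt
        · rw [he]
        · exact (gfun_anti hq0 hq1 ⟨hw, by linarith⟩ ⟨by linarith, by linarith⟩ hlt).le
      exact le_trans (min_le_left _ _) this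
    · have hwd : 1 + dl ≤ w := by
        rcases abs_cases (1 - w) with ⟨he, _⟩ | ⟨he, _⟩
        · linarith
        · linarith
      have : gfun q (1 + dl) ≤ gfun q w := by
        rcases eq_or_lt_of_le hwd with he | hlt
        · rw [he]
        · exact (gfun_mono hq0 hq1 (Set.mem_Ici.2 (by linarith)) (Set.mem_Ici.2 (by linarith)) hlt).le
      exact le_trans (min_le_right _ _) this
  have habs : |1 - w| ^ q ≤ 1 + W := by
    have h1 : |1 - w| ≤ 1 + W := by
      rw [abs_le]; constructor <;> nlinarith
    calc |1 - w| ^ q ≤ (1 + W) ^ q := Real.rpow_le_rpow (abs_nonneg _) h1 hq0.le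
      _ ≤ (1 + W) ^ (1 : ℝ) := Real.rpow_le_rpow_of_exponent_le (by linarith) hq1.le
      _ = 1 + W := Real.rpow_one _
  have hfin : (1 + W) ≤ C * gfun q w := by
    calc (1 + W) = ((1 + W) / m) * m := by field_simp
      _ ≤ ((1 + W) / m) * gfun q w := by
          apply mul_le_mul_of_nonneg_left hgm (by positivity)
      _ ≤ C * gfun q w := mul_le_mul_of_nonneg_right (le_max_right _ _) hgnn
  linarith

lemma funH_one (hq0 : 0 < q) (hq1 : q < 1) : funH q 1 = 1 := by
  simp [funH, Real.one_rpow]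

lemma funH_surjOn (hq0 : 0 < q) (hq1 : q < 1) {z : ℝ} (hz : 1 ≤ z) :
    ∃ s : ℝ, 1 ≤ s ∧ funH q s = z := by
  have h1q : (0 : ℝ) < 1 - q := by linarith
  have hznn : 0 ≤ z / (1 - q) := by positivity
  set b : ℝ := max 1 ((z / (1 - q)) ^ (1 / q)) with hbdef
  have hb1 : (1 : ℝ) ≤ b := le_max_left _ _
  have hbpos : (0 : ℝ) < b := by linarith
  have hbz : z ≤ funH q b := by
    have h1 : z / (1 - q) ≤ b ^ q := by
      calc z / (1 - q) = ((z / (1 - q)) ^ (1 / q)) ^ q := by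
            rw [← Real.rpow_mul hznn, one_div_mul_cancel hq0.ne', Real.rpow_one]
        _ ≤ b ^ q := Real.rpow_le_rpow (Real.rpow_nonneg hznn _) (le_max_right _ _) hq0.le
    have h2 : (0 : ℝ) ≤ q * b ^ (q - 1) := by
      apply mul_nonneg hq0.le (Real.rpow_nonneg hbpos.le _)
    have h3 : z ≤ (1 - q) * b ^ q := by
      rw [← div_le_iff₀' h1q]; exact h1
    unfold funH; linarith
  have hcont : ContinuousOn (funH q) (Set.Icc 1 b) := by
    apply continuousOn_of_forall_continuousAt
    intro w hw
    have hwpos : (0 : ℝ) < w := lt_of_lt_of_le one_pos hw.1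
    have c1 : ContinuousAt (fun w : ℝ => w ^ q) w :=
      Real.continuousAt_rpow_const w q (Or.inl hwpos.ne')
    have c2 : ContinuousAt (fun w : ℝ => w ^ (q - 1)) w :=
      Real.continuousAt_rpow_const w (q - 1) (Or.inl hwpos.ne')
    exact (continuousAt_const.mul c1).add (continuousAt_const.mul c2)
  have hmem : z ∈ Set.Icc (funH q 1) (funH q b) := by
    constructor
    · rw [funH_one hq0 hq1]; exact hz
    · exact hbz
  obtain ⟨s, hsmem, hs⟩ := intermediate_value_Icc hb1 hcont hmem
  exact ⟨s, hsmem.1, hs⟩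


/-- Basic structure of the tree: countability and the disjoint-covering property. -/
lemma tree_basic (T : DTree X μ) :
    T.mem.Countable ∧
    ∀ F : Set (Set X), F ⊆ T.mem →
      ∃ M : Set (Set X), M ⊆ F ∧ M.Countable ∧ M.Pairwise Disjoint ∧ ⋃₀ F = ⋃₀ M := by
  classical
  obtain ⟨lvl, hl0, hls, hlU, -⟩ := T.generated
  -- each level is inside the tree
  have hsub : ∀ m, lvl m ⊆ T.mem := by
    intro m
    induction m with
    | zero =>
      rw [hl0]; intro I hI; rw [Set.mem_singleton_iff] at hI; subst hI; exact T.top_mem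
    | succ m ih =>
      rw [hls m]; intro J hJ
      simp only [Set.mem_iUnion, exists_prop] at hJ
      obtain ⟨I, hI, hJI⟩ := hJ
      exact T.child_sub_mem I (ih hI) hJI
  -- membership in some level
  have hmemlvl : ∀ I ∈ T.mem, ∃ m, I ∈ lvl m := by
    intro I hI; rw [hlU] at hI; simpa only [Set.mem_iUnion] using hI
  -- countability
  have hcnt : ∀ m, (lvl m).Countable := by
    intro m
    induction m with
    | zero => rw [hl0]; exact Set.countable_singleton _
    | succ m ih =>
      rw [hls m]
      exact Set.Countable.biUnion ih (fun I hI => T.child_countable I (hsub m hI))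
  have hmemcnt : T.mem.Countable := by
    rw [hlU]; exact Set.countable_iUnion hcnt
  -- pairwise disjointness of levels
  have hdisj : ∀ m, (lvl m).Pairwise Disjoint := by
    intro m
    induction m with
    | zero => rw [hl0]; exact Set.pairwise_singleton _ _
    | succ m ih =>
      rw [hls m]
      intro J₁ hJ₁ J₂ hJ₂ hne
      simp only [Set.mem_iUnion, exists_prop] at hJ₁ hJ₂
      obtain ⟨I₁, hI₁, hJI₁⟩ := hJ₁
      obtain ⟨I₂, hI₂, hJI₂⟩ := hJ₂
      by_cases hI : I₁ = I₂
      · subst hI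
        exact T.child_disj I₁ (hsub m hI₁) hJI₁ hJI₂ hne
      · exact (ih hI₁ hI₂ hI).mono (T.child_sub I₁ (hsub m hI₁) J₁ hJI₁)
          (T.child_sub I₂ (hsub m hI₂) J₂ hJI₂)
  -- elements of deep levels are inside elements of shallow levels
  have habove : ∀ k m, m ≤ k → ∀ J ∈ lvl k, ∃ I ∈ lvl m, J ⊆ I := by
    intro k
    induction k with
    | zero =>
      intro m hm J hJ
      have : m = 0 := Nat.le_zero.1 hm
      subst this
      exact ⟨J, hJ, subset_rfl⟩
    | succ k ih =>
      intro m hm J hJ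
      rcases Nat.eq_or_lt_of_le hm with he | hlt
      · exact ⟨J, he ▸ hJ, subset_rfl⟩
      · rw [hls k] at hJ
        simp only [Set.mem_iUnion, exists_prop] at hJ
        obtain ⟨P, hP, hJP⟩ := hJ
        obtain ⟨I, hI, hPI⟩ := ih m (Nat.lt_succ_iff.1 hlt) P hP
        exact ⟨I, hI, (T.child_sub P (hsub k hP) J hJP).trans hPI⟩
  -- comparability
  have hcomp : ∀ m k, m ≤ k → ∀ I ∈ lvl m, ∀ J ∈ lvl k, J ⊆ I ∨ Disjoint I J := by
    intro m k hmk I hI J hJ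
    obtain ⟨I', hI', hJI'⟩ := habove k m hmk J hJ
    by_cases h : I = I'
    · subst h; exact Or.inl hJI'
    · exact Or.inr (((hdisj m) hI hI' h).mono_right hJI')
  -- strict inclusion decreases the level
  have hstrict : ∀ m k J K, J ∈ lvl m → K ∈ lvl k → J ⊂ K → k < m := by
    intro m k J K hJ hK hss
    by_contra hcon
    push_neg at hcon
    rcases hcomp m k hcon J hJ K hK with hsub' | hdis
    · rw [Set.ssubset_iff_subset_ne] at hss
      exact absurd (Set.Subset.antisymm hss.1 hsub') hss.2
    · have hne : J.Nonempty := nonempty_of_measure_ne_zero (T.pos J (hsub m hJ)).ne'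
      have : Disjoint J J := Disjoint.mono_right hss.subset hdis
      rw [disjoint_self] at this
      exact absurd this hne.ne_empty
  refine ⟨hmemcnt, ?_⟩
  intro F hF
  set Mx : Set (Set X) := {J | J ∈ F ∧ ∀ K ∈ F, ¬J ⊂ K} with hMxdef
  have hMxF : Mx ⊆ F := fun J hJ => hJ.1
  refine ⟨Mx, hMxF, hmemcnt.mono (fun J hJ => hF hJ.1), ?_, ?_⟩
  · intro J₁ hJ₁ J₂ hJ₂ hne
    obtain ⟨m₁, hm₁⟩ := hmemlvl J₁ (hF hJ₁.1)
    obtain ⟨m₂, hm₂⟩ := hmemlvl J₂ (hF hJ₂.1)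
    rcases le_total m₁ m₂ with hle | hle
    · rcases hcomp m₁ m₂ hle J₁ hm₁ J₂ hm₂ with hsub' | hdis
      · exact absurd (Set.ssubset_iff_subset_ne.2 ⟨hsub', hne.symm⟩) (hJ₂.2 J₁ hJ₁.1)
      · exact hdis
    · rcases hcomp m₂ m₁ hle J₂ hm₂ J₁ hm₁ with hsub' | hdis
      · exact absurd (Set.ssubset_iff_subset_ne.2 ⟨hsub', hne⟩) (hJ₁.2 J₂ hJ₂.1)
      · exact hdis.symm
  · apply Set.Subset.antisymm
    · rintro x hx
      rw [Set.mem_sUnion] at hx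
      obtain ⟨I, hIF, hxI⟩ := hx
      have hPex : ∃ m, ∃ J, J ∈ lvl m ∧ J ∈ F ∧ I ⊆ J := by
        obtain ⟨m, hm⟩ := hmemlvl I (hF hIF)
        exact ⟨m, I, hm, hIF, subset_rfl⟩
      obtain ⟨J, hJl, hJF, hIJ⟩ := Nat.find_spec hPex
      rw [Set.mem_sUnion]
      refine ⟨J, ⟨hJF, ?_⟩, hIJ hxI⟩
      intro K hKF hJK
      obtain ⟨k, hk⟩ := hmemlvl K (hF hKF)
      exact Nat.find_min hPex (hstrict _ k J K hJl hk hJK) ⟨K, hk, hKF, hIJ.trans hJK.subset⟩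
    · exact Set.sUnion_mono hMxF


section MaxOp

variable [IsProbabilityMeasure μ] (T : DTree X μ) {φ : X → ℝ}

lemma trAvg_nonneg {ψ : X → ℝ} (hψ : ∀ x, 0 ≤ ψ x) (I : Set X) : 0 ≤ trAvg μ ψ I := by
  unfold trAvg
  apply mul_nonneg (by positivity)
  exact integral_nonneg (fun x => hψ x)

lemma trAvg_univ (φ : X → ℝ) : trAvg μ φ Set.univ = ∫ x, φ x ∂μ := by
  unfold trAvg
  rw [measure_univ, ENNReal.toReal_one, inv_one, one_mul, setIntegral_univ]

/-- With a nonnegative function, the absolute values in `trMax` go away. -/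
lemma trMax_eq (hφ0 : ∀ x, 0 ≤ φ x) (x : X) :
    trMax μ T φ x = sSup {r : ℝ | ∃ I ∈ T.mem, x ∈ I ∧ r = trAvg μ φ I} := by
  have habs : (fun y => |φ y|) = φ := funext fun y => abs_of_nonneg (hφ0 y)
  rw [trMax, habs]

lemma trMax_measurable (φ : X → ℝ) : Measurable (trMax μ T φ) := by
  classical
  have hcnt : T.mem.Countable := (tree_basic T).1
  have : Countable ↥T.mem := hcnt.to_subtype
  have heq : trMax μ T φ = fun x => ⨆ I : T.mem,
      (if x ∈ (I : Set X) then trAvg μ (fun y => |φ y|) I else trAvg μ (fun y => |φ y|) Set.univ) := by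
    funext x
    rw [trMax, iSup]
    congr 1
    ext r
    constructor
    · rintro ⟨I, hI, hxI, rfl⟩
      exact ⟨⟨I, hI⟩, by simp [hxI]⟩
    · rintro ⟨⟨I, hI⟩, hr⟩
      dsimp only at hr
      by_cases hxI : x ∈ I
      · rw [if_pos hxI] at hr
        exact ⟨I, hI, hxI, hr.symm⟩
      · rw [if_neg hxI] at hr
        exact ⟨Set.univ, T.top_mem, Set.mem_univ x, hr.symm⟩
  rw [heq]
  exact Measurable.iSup fun I =>
    Measurable.ite (T.meas I I.2) measurable_const measurable_const

lemma trMax_nonneg (hφ0 : ∀ x, 0 ≤ φ x) (x : X) : 0 ≤ trMax μ T φ x := by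
  rw [trMax_eq T hφ0]
  apply Real.sSup_nonneg
  rintro r ⟨I, hI, hxI, rfl⟩
  exact trAvg_nonneg hφ0 I

lemma trMax_exists_gt (hφ0 : ∀ x, 0 ≤ φ x) {x : X} {lam : ℝ} (hlt : lam < trMax μ T φ x) :
    ∃ I ∈ T.mem, x ∈ I ∧ lam < trAvg μ φ I := by
  rw [trMax_eq T hφ0] at hlt
  have hne : {r : ℝ | ∃ I ∈ T.mem, x ∈ I ∧ r = trAvg μ φ I}.Nonempty :=
    ⟨trAvg μ φ Set.univ, Set.univ, T.top_mem, Set.mem_univ x, rfl⟩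
  obtain ⟨r, ⟨I, hI, hxI, rfl⟩, hlr⟩ := exists_lt_of_lt_csSup hne hlt
  exact ⟨I, hI, hxI, hlr⟩

/-- The covering estimate: `λ μ(U_λ) ≤ ∫_{U_λ} φ` for the union `U_λ` of all tree elements
with average `> λ`. -/
lemma weak_cover (hφm : Measurable φ) (hφ0 : ∀ x, 0 ≤ φ x) (hφi : Integrable φ μ)
    {lam : ℝ} (hlam : 0 < lam) :
    ENNReal.ofReal lam * μ (⋃₀ {I | I ∈ T.mem ∧ lam < trAvg μ φ I}) ≤
      ∫⁻ x in ⋃₀ {I | I ∈ T.mem ∧ lam < trAvg μ φ I}, ENNReal.ofReal (φ x) ∂μ := by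
  obtain ⟨-, hcover⟩ := tree_basic T
  set F : Set (Set X) := {I | I ∈ T.mem ∧ lam < trAvg μ φ I} with hFdef
  have hFsub : F ⊆ T.mem := fun I hI => hI.1
  obtain ⟨M, hMF, hMcnt, hMdisj, hMU⟩ := hcover F hFsub
  have hMmeas : ∀ I ∈ M, MeasurableSet I := fun I hI => T.meas I (hFsub (hMF hI))
  have : Countable ↥M := hMcnt.to_subtype
  have hdisj' : Pairwise (Function.onFun Disjoint fun I : M => (I : Set X)) := by
    intro i j hij
    exact hMdisj i.2 j.2 (Subtype.coe_injective.ne hij)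
  -- per-element estimate
  have hone : ∀ I ∈ M, ENNReal.ofReal lam * μ I ≤ ∫⁻ x in I, ENNReal.ofReal (φ x) ∂μ := by
    intro I hIM
    have hIF : I ∈ F := hMF hIM
    have hImem := hFsub hIF
    have hIm := T.meas I hImem
    have hpos : 0 < (μ I).toReal :=
      ENNReal.toReal_pos (T.pos I hImem).ne' (measure_ne_top μ I)
    have havg : lam < (μ I).toReal⁻¹ * ∫ x in I, φ x ∂μ := hIF.2
    have hreal : lam * (μ I).toReal ≤ ∫ x in I, φ x ∂μ := by
      have h' : lam < (∫ x in I, φ x ∂μ) / (μ I).toReal := by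
        rwa [div_eq_inv_mul]
      exact ((lt_div_iff₀ hpos).1 h').le
    have h1 : ENNReal.ofReal lam * μ I = ENNReal.ofReal (lam * (μ I).toReal) := by
      rw [ENNReal.ofReal_mul hlam.le, ENNReal.ofReal_toReal (measure_ne_top μ I)]
    rw [h1]
    calc ENNReal.ofReal (lam * (μ I).toReal) ≤ ENNReal.ofReal (∫ x in I, φ x ∂μ) :=
          ENNReal.ofReal_le_ofReal hreal
      _ = ∫⁻ x in I, ENNReal.ofReal (φ x) ∂μ :=
          ofReal_integral_eq_lintegral_ofReal (hφi.integrableOn)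
            (Filter.Eventually.of_forall (fun x => hφ0 x))
  rw [hMU, Set.sUnion_eq_iUnion,
    measure_iUnion hdisj' (fun i : M => hMmeas i i.2),
    lintegral_iUnion (fun i : M => hMmeas i i.2) hdisj', ← ENNReal.tsum_mul_left]
  exact ENNReal.tsum_le_tsum (fun i : M => hone i i.2)


/-- The set where the family of averages is unbounded is null. -/
lemma unbdd_null (hφm : Measurable φ) (hφ0 : ∀ x, 0 ≤ φ x) (hφi : Integrable φ μ) :
    μ {x | ¬BddAbove {r : ℝ | ∃ I ∈ T.mem, x ∈ I ∧ r = trAvg μ φ I}} = 0 := by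
  set N := {x | ¬BddAbove {r : ℝ | ∃ I ∈ T.mem, x ∈ I ∧ r = trAvg μ φ I}} with hNdef
  have hsub : ∀ R : ℝ, N ⊆ ⋃₀ {I | I ∈ T.mem ∧ R < trAvg μ φ I} := by
    intro R x hx
    rw [hNdef, Set.mem_setOf_eq] at hx
    have hex : ∃ r ∈ {r : ℝ | ∃ I ∈ T.mem, x ∈ I ∧ r = trAvg μ φ I}, R < r := by
      by_contra hcon
      push_neg at hcon
      exact hx ⟨R, fun r hr => hcon r hr⟩
    obtain ⟨r, ⟨I, hI, hxI, rfl⟩, hRr⟩ := hex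
    exact ⟨I, ⟨hI, hRr⟩, hxI⟩
  have hbound : ∀ R : ℝ, 0 < R →
      ENNReal.ofReal R * μ N ≤ ENNReal.ofReal (∫ x, φ x ∂μ) := by
    intro R hR
    calc ENNReal.ofReal R * μ N
        ≤ ENNReal.ofReal R * μ (⋃₀ {I | I ∈ T.mem ∧ R < trAvg μ φ I}) :=
          mul_le_mul_right (measure_mono (hsub R)) _
      _ ≤ ∫⁻ x in ⋃₀ {I | I ∈ T.mem ∧ R < trAvg μ φ I}, ENNReal.ofReal (φ x) ∂μ :=
          weak_cover T hφm hφ0 hφi hR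
      _ ≤ ∫⁻ x, ENNReal.ofReal (φ x) ∂μ := setLIntegral_le_lintegral _ _
      _ = ENNReal.ofReal (∫ x, φ x ∂μ) :=
          (ofReal_integral_eq_lintegral_ofReal hφi (Filter.Eventually.of_forall hφ0)).symm
  by_contra hne
  have hNtop : μ N ≠ ⊤ := by
    exact ne_top_of_le_ne_top (measure_ne_top μ Set.univ) (measure_mono (Set.subset_univ N))
  have hε : 0 < (μ N).toReal := ENNReal.toReal_pos hne hNtop
  have hφnn : 0 ≤ ∫ x, φ x ∂μ := integral_nonneg hφ0
  set R : ℝ := ((∫ x, φ x ∂μ) + 1) / (μ N).toReal with hRdef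
  have hR : 0 < R := by positivity
  have h := hbound R hR
  have hL : (ENNReal.ofReal R * μ N).toReal = R * (μ N).toReal := by
    rw [ENNReal.toReal_mul, ENNReal.toReal_ofReal hR.le]
  have hle : R * (μ N).toReal ≤ ∫ x, φ x ∂μ := by
    have := ENNReal.toReal_mono ENNReal.ofReal_ne_top h
    rwa [hL, ENNReal.toReal_ofReal hφnn] at this
  rw [hRdef, div_mul_cancel₀ _ hε.ne'] at hle
  linarith

/-- The sharp weak-type estimate on level sets of the maximal function. -/
lemma weak_type (hφm : Measurable φ) (hφ0 : ∀ x, 0 ≤ φ x) (hφi : Integrable φ μ)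
    {lam : ℝ} (hlam : 0 < lam) :
    ENNReal.ofReal lam * μ {x | lam < trMax μ T φ x} ≤
      ∫⁻ x in {x | lam < trMax μ T φ x}, ENNReal.ofReal (φ x) ∂μ := by
  set E := {x | lam < trMax μ T φ x} with hEdef
  set U := ⋃₀ {I | I ∈ T.mem ∧ lam < trAvg μ φ I} with hUdef
  set N := {x | ¬BddAbove {r : ℝ | ∃ I ∈ T.mem, x ∈ I ∧ r = trAvg μ φ I}} with hNdef
  have hEU : E ⊆ U := by
    intro x hx
    obtain ⟨I, hI, hxI, h⟩ := trMax_exists_gt T hφ0 hx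
    exact ⟨I, ⟨hI, h⟩, hxI⟩
  have hUE : U \ E ⊆ N := by
    rintro x ⟨hxU, hxE⟩
    rw [hNdef, Set.mem_setOf_eq]
    intro hbdd
    obtain ⟨I, ⟨hI, havg⟩, hxI⟩ := hxU
    have hle : trAvg μ φ I ≤ trMax μ T φ x := by
      rw [trMax_eq T hφ0]
      exact le_csSup hbdd ⟨I, hI, hxI, rfl⟩
    exact hxE (lt_of_lt_of_le havg hle)
  have hUsplit : U ⊆ E ∪ (U \ E) := by
    intro x hx
    by_cases hxE : x ∈ E
    · exact Or.inl hxE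
    · exact Or.inr ⟨hx, hxE⟩
  calc ENNReal.ofReal lam * μ E ≤ ENNReal.ofReal lam * μ U :=
        mul_le_mul_right (measure_mono hEU) _
    _ ≤ ∫⁻ x in U, ENNReal.ofReal (φ x) ∂μ := weak_cover T hφm hφ0 hφi hlam
    _ ≤ ∫⁻ x in E ∪ (U \ E), ENNReal.ofReal (φ x) ∂μ := lintegral_mono_set hUsplit
    _ ≤ (∫⁻ x in E, ENNReal.ofReal (φ x) ∂μ) + ∫⁻ x in U \ E, ENNReal.ofReal (φ x) ∂μ :=
        lintegral_union_le _ _ _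
    _ = ∫⁻ x in E, ENNReal.ofReal (φ x) ∂μ := by
        have h0 : ∫⁻ x in U \ E, ENNReal.ofReal (φ x) ∂μ = 0 := by
          apply le_antisymm _ (zero_le)
          calc ∫⁻ x in U \ E, ENNReal.ofReal (φ x) ∂μ
              ≤ ∫⁻ x in N, ENNReal.ofReal (φ x) ∂μ := lintegral_mono_set hUE
            _ = 0 := setLIntegral_measure_zero _ _ (unbdd_null T hφm hφ0 hφi)
        rw [h0, add_zero]


open intervalIntegral in
lemma lint_Ioo {a b r : ℝ} (ha : 0 < a) (hab : a ≤ b) (hr : r ≠ -1) :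
    ∫⁻ lam in Set.Ioo a b, ENNReal.ofReal (lam ^ r) =
      ENNReal.ofReal ((b ^ (r + 1) - a ^ (r + 1)) / (r + 1)) := by
  have h0 : (0 : ℝ) ∉ Set.uIcc a b := by
    rw [Set.uIcc_of_le hab]
    intro hmem
    exact absurd hmem.1 (not_le.2 ha)
  have hInt : IntervalIntegrable (fun lam : ℝ => lam ^ r) volume a b :=
    intervalIntegrable_rpow (Or.inr h0)
  have hIntOn : IntegrableOn (fun lam : ℝ => lam ^ r) (Set.Ioo a b) volume :=
    (hInt.1).mono_set Set.Ioo_subset_Ioc_self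
  have hnn : 0 ≤ᵐ[volume.restrict (Set.Ioo a b)] fun lam : ℝ => lam ^ r := by
    filter_upwards [ae_restrict_mem measurableSet_Ioo] with lam hlam
    exact Real.rpow_nonneg (le_of_lt (lt_trans ha hlam.1)) _
  rw [← ofReal_integral_eq_lintegral_ofReal hIntOn hnn]
  congr 1
  rw [← MeasureTheory.integral_Ioc_eq_integral_Ioo, ← integral_of_le hab]
  exact integral_rpow (Or.inr ⟨hr, h0⟩)

/-- The fundamental inequality `(1-q)∫G^q + q∫φ G^(q-1) ≤ (1-q)L^q + q L^(q-1) f`,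
together with integrability of the relevant functions, where `G = max (M_T φ) L`. -/
lemma star_ineq {q L f : ℝ} (hq0 : 0 < q) (hq1 : q < 1) (hL : 0 < L)
    (hφm : Measurable φ) (hφ0 : ∀ x, 0 ≤ φ x) (hφi : Integrable φ μ)
    (hf : ∫ x, φ x ∂μ = f) :
    Integrable (fun x => max (trMax μ T φ x) L ^ q) μ ∧
    Integrable (fun x => φ x * max (trMax μ T φ x) L ^ (q - 1)) μ ∧
    (1 - q) * (∫ x, max (trMax μ T φ x) L ^ q ∂μ) +
        q * (∫ x, φ x * max (trMax μ T φ x) L ^ (q - 1) ∂μ) ≤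
      (1 - q) * L ^ q + q * L ^ (q - 1) * f := by
  have h1q : (0 : ℝ) < 1 - q := by linarith
  set M := trMax μ T φ with hMdef
  have hMm : Measurable M := trMax_measurable T φ
  set G : X → ℝ := fun x => max (M x) L with hGdef
  have hGm : Measurable G := hMm.max measurable_const
  have hGL : ∀ x, L ≤ G x := fun x => le_max_right _ _
  have hGpos : ∀ x, 0 < G x := fun x => lt_of_lt_of_le hL (hGL x)
  -- Step A : pointwise layer-cake identity
  have hlayerA : ∀ x, ENNReal.ofReal (G x ^ q - L ^ q) =
      ∫⁻ lam in Set.Ioi L,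
        (Set.Iio (G x)).indicator (fun l => ENNReal.ofReal (q * l ^ (q - 1))) lam ∂volume := by
    intro x
    rw [lintegral_indicator measurableSet_Iio,
      Measure.restrict_restrict measurableSet_Iio, Set.Iio_inter_Ioi]
    have hpull : ∀ lam : ℝ, ENNReal.ofReal (q * lam ^ (q - 1)) =
        ENNReal.ofReal q * ENNReal.ofReal (lam ^ (q - 1)) := fun lam =>
      ENNReal.ofReal_mul hq0.le
    rw [lintegral_congr (fun lam => hpull lam),
      lintegral_const_mul' _ _ ENNReal.ofReal_ne_top,
      lint_Ioo hL (hGL x) (by intro hc; rw [sub_eq_iff_eq_add] at hc; norm_num at hc; linarith),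
      ← ENNReal.ofReal_mul hq0.le]
    congr 1
    rw [sub_add_cancel]
    field_simp
  -- measurability for the first swap
  have hunc1 : Function.uncurry (fun x lam =>
      (Set.Iio (G x)).indicator (fun l => ENNReal.ofReal (q * l ^ (q - 1))) lam)
      = fun p : X × ℝ =>
        ({p : X × ℝ | p.2 < G p.1}).indicator (fun p => ENNReal.ofReal (q * p.2 ^ (q - 1))) p := by
    funext p
    rcases p with ⟨x, lam⟩
    by_cases h : lam < G x <;>
      simp [Function.uncurry, Set.indicator_apply, h, Set.mem_Iio, Set.mem_setOf_eq]
  have hmeas1 : Measurable (Function.uncurry (fun x lam =>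
      (Set.Iio (G x)).indicator (fun l => ENNReal.ofReal (q * l ^ (q - 1))) lam)) := by
    rw [hunc1]
    exact Measurable.indicator
      ((measurable_const.mul (measurable_snd.pow measurable_const)).ennreal_ofReal)
      (measurableSet_lt measurable_snd (hGm.comp measurable_fst))
  -- Step L : the distributional identity
  have hLHS : ∫⁻ x, ENNReal.ofReal (G x ^ q - L ^ q) ∂μ
      = ∫⁻ lam in Set.Ioi L, ENNReal.ofReal (q * lam ^ (q - 1)) * μ {x | lam < G x} ∂volume := by
    rw [lintegral_congr hlayerA, lintegral_lintegral_swap hmeas1.aemeasurable]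
    apply lintegral_congr
    intro lam
    have hpt : ∀ x, (Set.Iio (G x)).indicator (fun l => ENNReal.ofReal (q * l ^ (q - 1))) lam =
        ({x' | lam < G x'}).indicator (fun _ => ENNReal.ofReal (q * lam ^ (q - 1))) x := by
      intro x
      by_cases h : lam < G x <;>
        simp [Set.indicator_apply, h, Set.mem_Iio, Set.mem_setOf_eq]
    rw [lintegral_congr hpt, lintegral_indicator (measurableSet_lt measurable_const hGm),
      setLIntegral_const]
  -- Step W : insert the weak-type estimate
  have hWT : ∀ lam ∈ Set.Ioi L,
      ENNReal.ofReal (q * lam ^ (q - 1)) * μ {x | lam < G x} ≤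
        ENNReal.ofReal (q * lam ^ (q - 2)) *
          ∫⁻ x in {x | lam < M x}, ENNReal.ofReal (φ x) ∂μ := by
    intro lam hlam
    rw [Set.mem_Ioi] at hlam
    have hlam0 : 0 < lam := lt_trans hL hlam
    have hset : {x | lam < G x} = {x | lam < M x} := by
      ext x
      simp only [Set.mem_setOf_eq, hGdef, lt_max_iff]
      constructor
      · rintro (h | h)
        · exact h
        · exact absurd h (not_lt.2 hlam.le)
      · exact Or.inl
    rw [hset]
    have hwt := weak_type T hφm hφ0 hφi hlam0
    have hE : μ {x | lam < M x} ≤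
        (ENNReal.ofReal lam)⁻¹ * ∫⁻ x in {x | lam < M x}, ENNReal.ofReal (φ x) ∂μ := by
      have h1 : (ENNReal.ofReal lam)⁻¹ * (ENNReal.ofReal lam * μ {x | lam < M x})
          = μ {x | lam < M x} := by
        rw [← mul_assoc, ENNReal.inv_mul_cancel (ENNReal.ofReal_pos.2 hlam0).ne'
          ENNReal.ofReal_ne_top, one_mul]
      calc μ {x | lam < M x} = _ := h1.symm
        _ ≤ _ := mul_le_mul_right hwt _
    calc ENNReal.ofReal (q * lam ^ (q - 1)) * μ {x | lam < M x}
        ≤ ENNReal.ofReal (q * lam ^ (q - 1)) *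
            ((ENNReal.ofReal lam)⁻¹ * ∫⁻ x in {x | lam < M x}, ENNReal.ofReal (φ x) ∂μ) :=
          mul_le_mul_right hE _
      _ = ENNReal.ofReal (q * lam ^ (q - 2)) *
            ∫⁻ x in {x | lam < M x}, ENNReal.ofReal (φ x) ∂μ := by
          rw [← mul_assoc]
          congr 1
          rw [← ENNReal.ofReal_inv_of_pos hlam0,
            ← ENNReal.ofReal_mul (by positivity : 0 ≤ q * lam ^ (q - 1))]
          congr 1
          have h2 : lam ^ (q - 1) * lam⁻¹ = lam ^ (q - 2) := by
            rw [← Real.rpow_neg_one lam, ← Real.rpow_add hlam0]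
            congr 1
            ring
          rw [mul_assoc, h2]
  -- measurability for the second swap
  have hunc2 : Function.uncurry (fun lam x =>
      ENNReal.ofReal (φ x) * (Set.Iio (M x)).indicator (fun l => ENNReal.ofReal (q * l ^ (q - 2))) lam)
      = fun p : ℝ × X =>
        ENNReal.ofReal (φ p.2) *
          ({p : ℝ × X | p.1 < M p.2}).indicator (fun p => ENNReal.ofReal (q * p.1 ^ (q - 2))) p := by
    funext p
    rcases p with ⟨lam, x⟩
    by_cases h : lam < M x <;>
      simp [Function.uncurry, Set.indicator_apply, h, Set.mem_Iio, Set.mem_setOf_eq]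
  have hmeas2 : Measurable (Function.uncurry (fun lam x =>
      ENNReal.ofReal (φ x) *
        (Set.Iio (M x)).indicator (fun l => ENNReal.ofReal (q * l ^ (q - 2))) lam)) := by
    rw [hunc2]
    exact ((hφm.comp measurable_snd).ennreal_ofReal).mul
      (Measurable.indicator
        ((measurable_const.mul (measurable_fst.pow measurable_const)).ennreal_ofReal)
        (measurableSet_lt measurable_fst (hMm.comp measurable_snd)))
  -- Step S : swap back
  have hRHS : ∫⁻ lam in Set.Ioi L,
      ENNReal.ofReal (q * lam ^ (q - 2)) *
        ∫⁻ x in {x | lam < M x}, ENNReal.ofReal (φ x) ∂μ ∂volume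
      = ∫⁻ x, ENNReal.ofReal (φ x) *
          ENNReal.ofReal (q / (1 - q) * (L ^ (q - 1) - G x ^ (q - 1))) ∂μ := by
    have h1 : ∀ lam : ℝ, ENNReal.ofReal (q * lam ^ (q - 2)) *
        ∫⁻ x in {x | lam < M x}, ENNReal.ofReal (φ x) ∂μ
        = ∫⁻ x, ENNReal.ofReal (φ x) *
            (Set.Iio (M x)).indicator (fun l => ENNReal.ofReal (q * l ^ (q - 2))) lam ∂μ := by
      intro lam
      rw [← lintegral_indicator (measurableSet_lt measurable_const hMm),
        ← lintegral_const_mul' _ _ ENNReal.ofReal_ne_top]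
      apply lintegral_congr
      intro x
      by_cases h : lam < M x <;>
        simp [Set.indicator_apply, h, Set.mem_Iio, Set.mem_setOf_eq, mul_comm]
    rw [lintegral_congr h1, lintegral_lintegral_swap hmeas2.aemeasurable]
    apply lintegral_congr
    intro x
    rw [lintegral_const_mul' _ _ ENNReal.ofReal_ne_top]
    congr 1
    rw [lintegral_indicator measurableSet_Iio,
      Measure.restrict_restrict measurableSet_Iio, Set.Iio_inter_Ioi]
    have hpull : ∀ lam : ℝ, ENNReal.ofReal (q * lam ^ (q - 2)) =
        ENNReal.ofReal q * ENNReal.ofReal (lam ^ (q - 2)) := fun lam =>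
      ENNReal.ofReal_mul hq0.le
    rcases le_or_gt (M x) L with hml | hml
    · rw [Set.Ioo_eq_empty (not_lt.2 hml), Measure.restrict_empty, lintegral_zero_measure]
      have hGx : G x = L := max_eq_right hml
      rw [hGx, sub_self, mul_zero, ENNReal.ofReal_zero]
    · have hGx : G x = M x := max_eq_left hml.le
      rw [lintegral_congr (fun lam => hpull lam),
        lintegral_const_mul' _ _ ENNReal.ofReal_ne_top,
        lint_Ioo hL hml.le (by intro hc; rw [sub_eq_iff_eq_add] at hc; norm_num at hc; linarith),
        ← ENNReal.ofReal_mul hq0.le, hGx]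
      congr 1
      have e : q - 2 + 1 = q - 1 := by ring
      rw [e]
      have hq1ne : q - 1 ≠ 0 := by intro hc; rw [sub_eq_zero] at hc; linarith
      field_simp
      ring
  -- the ENNReal chain
  have hchain : ∫⁻ x, ENNReal.ofReal (G x ^ q - L ^ q) ∂μ ≤
      ∫⁻ x, ENNReal.ofReal (φ x * (q / (1 - q) * (L ^ (q - 1) - G x ^ (q - 1)))) ∂μ := by
    rw [hLHS]
    calc ∫⁻ lam in Set.Ioi L, ENNReal.ofReal (q * lam ^ (q - 1)) * μ {x | lam < G x} ∂volume
        ≤ ∫⁻ lam in Set.Ioi L, ENNReal.ofReal (q * lam ^ (q - 2)) *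
            ∫⁻ x in {x | lam < M x}, ENNReal.ofReal (φ x) ∂μ ∂volume := by
          apply lintegral_mono_ae
          filter_upwards [ae_restrict_mem measurableSet_Ioi] with lam hlam
          exact hWT lam hlam
      _ = _ := by
          rw [hRHS]
          apply lintegral_congr
          intro x
          rw [← ENNReal.ofReal_mul (hφ0 x)]
  -- finiteness of the right-hand side
  have hrhs_fin : ∫⁻ x, ENNReal.ofReal (φ x * (q / (1 - q) * (L ^ (q - 1) - G x ^ (q - 1)))) ∂μ
      ≤ ENNReal.ofReal (q / (1 - q) * L ^ (q - 1)) * ENNReal.ofReal (∫ x, φ x ∂μ) := by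
    calc ∫⁻ x, ENNReal.ofReal (φ x * (q / (1 - q) * (L ^ (q - 1) - G x ^ (q - 1)))) ∂μ
        ≤ ∫⁻ x, ENNReal.ofReal (q / (1 - q) * L ^ (q - 1) * φ x) ∂μ := by
          apply lintegral_mono
          intro x
          apply ENNReal.ofReal_le_ofReal
          have hg0 : 0 ≤ G x ^ (q - 1) := Real.rpow_nonneg (hGpos x).le _
          have hc0 : 0 ≤ q / (1 - q) := by positivity
          have hL0 : 0 ≤ L ^ (q - 1) := Real.rpow_nonneg hL.le _
          have h1 : q / (1 - q) * (L ^ (q - 1) - G x ^ (q - 1)) ≤ q / (1 - q) * L ^ (q - 1) := by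
            apply mul_le_mul_of_nonneg_left _ hc0
            linarith
          calc φ x * (q / (1 - q) * (L ^ (q - 1) - G x ^ (q - 1)))
              ≤ φ x * (q / (1 - q) * L ^ (q - 1)) := mul_le_mul_of_nonneg_left h1 (hφ0 x)
            _ = q / (1 - q) * L ^ (q - 1) * φ x := by ring
      _ = ENNReal.ofReal (q / (1 - q) * L ^ (q - 1)) * ENNReal.ofReal (∫ x, φ x ∂μ) := by
          rw [lintegral_congr (fun x =>
            ENNReal.ofReal_mul (by positivity : (0:ℝ) ≤ q / (1 - q) * L ^ (q - 1)))]
          rw [lintegral_const_mul' _ _ ENNReal.ofReal_ne_top,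
            ofReal_integral_eq_lintegral_ofReal hφi (Filter.Eventually.of_forall hφ0)]
  -- integrability of G^q
  have hGq_nn : ∀ x, (0:ℝ) ≤ G x ^ q := fun x => Real.rpow_nonneg (hGpos x).le _
  have hGqLq_nn : ∀ x, (0:ℝ) ≤ G x ^ q - L ^ q := fun x =>
    sub_nonneg.2 (Real.rpow_le_rpow hL.le (hGL x) hq0.le)
  have hGqfin : ∫⁻ x, ENNReal.ofReal (G x ^ q) ∂μ < ⊤ := by
    have hpt : ∀ x, ENNReal.ofReal (G x ^ q) =
        ENNReal.ofReal (G x ^ q - L ^ q) + ENNReal.ofReal (L ^ q) := by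
      intro x
      rw [← ENNReal.ofReal_add (hGqLq_nn x) (Real.rpow_nonneg hL.le _), sub_add_cancel]
    rw [lintegral_congr hpt, lintegral_add_right _ measurable_const, lintegral_const,
      measure_univ, mul_one]
    apply ENNReal.add_lt_top.2
    constructor
    · exact lt_of_le_of_lt (le_trans hchain hrhs_fin) (ENNReal.mul_lt_top
        ENNReal.ofReal_lt_top ENNReal.ofReal_lt_top)
    · exact ENNReal.ofReal_lt_top
  have hIG : Integrable (fun x => G x ^ q) μ := by
    refine ⟨(hGm.pow measurable_const).aestronglyMeasurable, ?_⟩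
    rw [hasFiniteIntegral_iff_ofReal (Filter.Eventually.of_forall hGq_nn)]
    exact hGqfin
  -- integrability of φ * G^(q-1)
  have hIP : Integrable (fun x => φ x * G x ^ (q - 1)) μ := by
    apply Integrable.mono (hφi.const_mul (L ^ (q - 1)))
      ((hφm.mul (hGm.pow measurable_const)).aestronglyMeasurable)
    apply Filter.Eventually.of_forall
    intro x
    have hg0 : 0 ≤ G x ^ (q - 1) := Real.rpow_nonneg (hGpos x).le _
    have hbd : G x ^ (q - 1) ≤ L ^ (q - 1) :=
      Real.rpow_le_rpow_of_nonpos hL (hGL x) (by linarith)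
    rw [Real.norm_eq_abs, Real.norm_eq_abs, Pi.mul_apply, abs_of_nonneg (mul_nonneg (hφ0 x) hg0),
      abs_of_nonneg (mul_nonneg (Real.rpow_nonneg hL.le _) (hφ0 x))]
    calc φ x * G x ^ (q - 1) ≤ φ x * L ^ (q - 1) := mul_le_mul_of_nonneg_left hbd (hφ0 x)
      _ = L ^ (q - 1) * φ x := mul_comm _ _
  -- convert the chain to a real inequality
  have hsub_int : Integrable (fun x => G x ^ q - L ^ q) μ := hIG.sub (integrable_const _)
  have hrhs_int : Integrable (fun x => φ x * (q / (1 - q) * (L ^ (q - 1) - G x ^ (q - 1)))) μ := by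
    have he : (fun x => φ x * (q / (1 - q) * (L ^ (q - 1) - G x ^ (q - 1))))
        = fun x => q / (1 - q) * (L ^ (q - 1) * φ x - φ x * G x ^ (q - 1)) := by
      funext x; ring
    rw [he]
    exact ((hφi.const_mul _).sub hIP).const_mul _
  have hrhs_nn : ∀ x, (0:ℝ) ≤ φ x * (q / (1 - q) * (L ^ (q - 1) - G x ^ (q - 1))) := by
    intro x
    apply mul_nonneg (hφ0 x)
    apply mul_nonneg (by positivity)
    have hbd : G x ^ (q - 1) ≤ L ^ (q - 1) :=
      Real.rpow_le_rpow_of_nonpos hL (hGL x) (by linarith)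
    linarith
  have hreal : ∫ x, (G x ^ q - L ^ q) ∂μ ≤
      ∫ x, φ x * (q / (1 - q) * (L ^ (q - 1) - G x ^ (q - 1))) ∂μ := by
    have h1 := hchain
    rw [← ofReal_integral_eq_lintegral_ofReal hsub_int
        (Filter.Eventually.of_forall hGqLq_nn),
      ← ofReal_integral_eq_lintegral_ofReal hrhs_int
        (Filter.Eventually.of_forall hrhs_nn)] at h1
    exact (ENNReal.ofReal_le_ofReal_iff (integral_nonneg hrhs_nn)).1 h1
  -- final bookkeeping
  refine ⟨hIG, hIP, ?_⟩
  have e1 : ∫ x, (G x ^ q - L ^ q) ∂μ = (∫ x, G x ^ q ∂μ) - L ^ q := by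
    rw [integral_sub hIG (integrable_const _), integral_const, probReal_univ, one_smul]
  have e2 : ∫ x, φ x * (q / (1 - q) * (L ^ (q - 1) - G x ^ (q - 1))) ∂μ
      = q / (1 - q) * (L ^ (q - 1) * f - ∫ x, φ x * G x ^ (q - 1) ∂μ) := by
    have he : (fun x => φ x * (q / (1 - q) * (L ^ (q - 1) - G x ^ (q - 1))))
        = fun x => q / (1 - q) * (L ^ (q - 1) * φ x - φ x * G x ^ (q - 1)) := by
      funext x; ring
    rw [he, integral_const_mul, integral_sub (hφi.const_mul _) hIP, integral_const_mul, hf]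
  rw [e1, e2] at hreal
  have e3 : (1 - q) * (q / (1 - q) * (L ^ (q - 1) * f - ∫ x, φ x * G x ^ (q - 1) ∂μ))
      = q * (L ^ (q - 1) * f - ∫ x, φ x * G x ^ (q - 1) ∂μ) := by
    field_simp
  have h4 := mul_le_mul_of_nonneg_left hreal h1q.le
  rw [e3] at h4
  nlinarith [h4]

end MaxOp

end Stmt1Aux

set_option maxHeartbeats 1000000 in
/-- characterization of the extremal sequences. -/
theorem statement1 {X : Type*} [MeasurableSpace X] (μ : Measure X)
    [IsProbabilityMeasure μ] [NullSingletonClass μ] (T : DTree X μ)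
    (q f h L : ℝ) (hq : q ∈ Set.Ioo (0 : ℝ) 1) (hh : 0 < h) (hhf : h ≤ f ^ q)
    (hL : f ≤ L) (φ : ℕ → X → ℝ) (hm : ∀ n, Measurable (φ n))
    (h0 : ∀ n x, 0 ≤ φ n x) (hint : ∀ n, Integrable (φ n) μ)
    (hf : ∀ n, (∫ x, φ n x ∂μ) = f) (hhn : ∀ n, (∫ x, φ n x ^ q ∂μ) = h) :
    Tendsto (fun n => ∫ x, (max (trMax μ T (φ n) x) L) ^ q ∂μ) atTop
        (nhds (h * bellC q f h L)) ↔
      Tendsto (fun n =>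
          ∫ x, |max (trMax μ T (φ n) x) L - bellC q f h L ^ (1 / q) * φ n x| ^ q ∂μ)
        atTop (nhds 0) := by
  obtain ⟨hq0, hq1⟩ := hq
  have h1q : (0 : ℝ) < 1 - q := by linarith
  -- positivity
  have hf0 : 0 ≤ f := by rw [← hf 0]; exact integral_nonneg (h0 0)
  have hfpos : 0 < f := by
    rcases hf0.eq_or_lt with he | hgt
    · exfalso; rw [← he, Real.zero_rpow hq0.ne'] at hhf; linarith
    · exact hgt
  have hLpos : 0 < L := lt_of_lt_of_le hfpos hL
  -- the constant σ
  have hnum : h ≤ (1 - q) * L ^ q + q * L ^ (q - 1) * f := by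
    have h1 := Stmt1Aux.amgm hq0 hq1 hf0 hLpos
    have h2 : f ^ q ≤ L ^ q := Real.rpow_le_rpow hf0 hL hq0.le
    nlinarith [h1]
  have hz1 : 1 ≤ ((1 - q) * L ^ q + q * L ^ (q - 1) * f) / h := by
    rw [le_div_iff₀ hh]; linarith
  obtain ⟨s₀, hs₀1, hs₀⟩ := Stmt1Aux.funH_surjOn hq0 hq1 hz1
  have hex : ∃ a ∈ Set.Ici (1 : ℝ), funH q a =
      ((1 - q) * L ^ q + q * L ^ (q - 1) * f) / h := ⟨s₀, hs₀1, hs₀⟩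
  set σ : ℝ := Function.invFunOn (funH q) (Set.Ici 1)
      (((1 - q) * L ^ q + q * L ^ (q - 1) * f) / h) with hσdef
  have hσ1 : 1 ≤ σ := Function.invFunOn_mem hex
  have hσH : funH q σ = ((1 - q) * L ^ q + q * L ^ (q - 1) * f) / h :=
    Function.invFunOn_eq hex
  have hσ0 : 0 < σ := lt_of_lt_of_le one_pos hσ1
  have hcdef : bellC q f h L = σ ^ q := by rw [bellC, funOmega]
  have hcpos : 0 < bellC q f h L := by rw [hcdef]; positivity
  have hcq : bellC q f h L ^ (1 / q) = σ := by
    rw [hcdef, ← Real.rpow_mul hσ0.le, mul_one_div_cancel hq0.ne', Real.rpow_one]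
  -- the expansion of B in terms of σ
  have hBz : (1 - q) * L ^ q + q * L ^ (q - 1) * f
      = h * ((1 - q) * σ ^ q + q * σ ^ (q - 1)) := by
    have h1 : h * (((1 - q) * L ^ q + q * L ^ (q - 1) * f) / h)
        = (1 - q) * L ^ q + q * L ^ (q - 1) * f := by field_simp
    rw [← h1, ← hσH]
    simp only [funH]
  have hσq : σ ^ (q - 1) * σ = σ ^ q := by
    rw [← Real.rpow_add_one hσ0.ne', sub_add_cancel]
  -- the per-n data
  have hGm : ∀ n, Measurable (fun x => max (trMax μ T (φ n) x) L) :=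
    fun n => (Stmt1Aux.trMax_measurable T (φ n)).max measurable_const
  have hGL : ∀ n x, L ≤ max (trMax μ T (φ n) x) L := fun n x => le_max_right _ _
  have hGpos : ∀ n x, 0 < max (trMax μ T (φ n) x) L :=
    fun n x => lt_of_lt_of_le hLpos (hGL n x)
  have hstar := fun n => Stmt1Aux.star_ineq T hq0 hq1 hLpos (hm n) (h0 n) (hint n) (hf n)
  have hIG : ∀ n, Integrable (fun x => max (trMax μ T (φ n) x) L ^ q) μ :=
    fun n => (hstar n).1
  have hIP : ∀ n, Integrable (fun x => φ n x * max (trMax μ T (φ n) x) L ^ (q - 1)) μ :=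
    fun n => (hstar n).2.1
  have hineq := fun n => (hstar n).2.2
  have hIphiq : ∀ n, Integrable (fun x => φ n x ^ q) μ := by
    intro n
    by_contra hcon
    have := hhn n
    rw [integral_undef hcon] at this
    exact absurd this.symm hh.ne'
  -- integrability of |G - σ φ|^q
  have hIabs : ∀ n, Integrable (fun x => |max (trMax μ T (φ n) x) L - σ * φ n x| ^ q) μ := by
    intro n
    apply Integrable.mono ((hIG n).add ((hIphiq n).const_mul (σ ^ q)))
      (((((hGm n).sub ((hm n).const_mul σ)).abs).pow measurable_const).aestronglyMeasurable)
    apply Filter.Eventually.of_forall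
    intro x
    have hsnn : 0 ≤ σ * φ n x := mul_nonneg hσ0.le (h0 n x)
    have h1 : |max (trMax μ T (φ n) x) L - σ * φ n x| ≤ max (trMax μ T (φ n) x) L + σ * φ n x := by
      rw [abs_sub_le_iff]
      constructor <;> nlinarith [hGpos n x, hsnn]
    have h2 : |max (trMax μ T (φ n) x) L - σ * φ n x| ^ q
        ≤ max (trMax μ T (φ n) x) L ^ q + (σ * φ n x) ^ q := by
      calc |max (trMax μ T (φ n) x) L - σ * φ n x| ^ q
          ≤ (max (trMax μ T (φ n) x) L + σ * φ n x) ^ q :=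
            Real.rpow_le_rpow (abs_nonneg _) h1 hq0.le
        _ ≤ _ := Stmt1Aux.rpow_subadd hq0 hq1 (hGpos n x).le hsnn
    have h3 : (σ * φ n x) ^ q = σ ^ q * φ n x ^ q := Real.mul_rpow hσ0.le (h0 n x)
    rw [h3] at h2
    have h4 : 0 ≤ max (trMax μ T (φ n) x) L ^ q + σ ^ q * φ n x ^ q :=
      add_nonneg (Real.rpow_nonneg (hGpos n x).le q)
        (mul_nonneg (Real.rpow_nonneg hσ0.le q) (Real.rpow_nonneg (h0 n x) q))
    have h5 : ((fun x => max (trMax μ T (φ n) x) L ^ q) + fun x => σ ^ q * φ n x ^ q) x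
        = max (trMax μ T (φ n) x) L ^ q + σ ^ q * φ n x ^ q := rfl
    rw [Real.norm_eq_abs, Real.norm_eq_abs,
      abs_of_nonneg (Real.rpow_nonneg (abs_nonneg _) _), h5, abs_of_nonneg h4]
    exact h2
  -- key bound for the easy direction
  have habs_bound : ∀ n, |(∫ x, max (trMax μ T (φ n) x) L ^ q ∂μ) - h * bellC q f h L|
      ≤ ∫ x, |max (trMax μ T (φ n) x) L - σ * φ n x| ^ q ∂μ := by
    intro n
    have e1 : (∫ x, max (trMax μ T (φ n) x) L ^ q ∂μ) - h * bellC q f h L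
        = ∫ x, (max (trMax μ T (φ n) x) L ^ q - σ ^ q * φ n x ^ q) ∂μ := by
      rw [integral_sub (hIG n) ((hIphiq n).const_mul _), integral_const_mul, hhn n, hcdef]
      ring
    rw [e1]
    calc |∫ x, (max (trMax μ T (φ n) x) L ^ q - σ ^ q * φ n x ^ q) ∂μ|
        ≤ ∫ x, |max (trMax μ T (φ n) x) L ^ q - σ ^ q * φ n x ^ q| ∂μ := by
          have := norm_integral_le_integral_norm
            (fun x => max (trMax μ T (φ n) x) L ^ q - σ ^ q * φ n x ^ q) (μ := μ)
          simpa [Real.norm_eq_abs] using this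
      _ ≤ ∫ x, |max (trMax μ T (φ n) x) L - σ * φ n x| ^ q ∂μ := by
          apply integral_mono ((hIG n).sub ((hIphiq n).const_mul _)).abs (hIabs n)
          intro x
          simp only [Pi.sub_apply]
          have h3 : (σ * φ n x) ^ q = σ ^ q * φ n x ^ q := Real.mul_rpow hσ0.le (h0 n x)
          rw [← h3]
          exact Stmt1Aux.abs_rpow_sub_le hq0 hq1 (hGpos n x).le (mul_nonneg hσ0.le (h0 n x))
  -- rewrite the second limit
  have hrw : (fun n => ∫ x, |max (trMax μ T (φ n) x) L - bellC q f h L ^ (1 / q) * φ n x| ^ q ∂μ)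
      = fun n => ∫ x, |max (trMax μ T (φ n) x) L - σ * φ n x| ^ q ∂μ := by
    funext n; rw [hcq]
  rw [hrw]
  constructor
  · -- hard direction
    intro h1
    have hSLint : ∀ n, Integrable (fun x =>
        q * σ * (φ n x * max (trMax μ T (φ n) x) L ^ (q - 1))
          + (1 - q) * max (trMax μ T (φ n) x) L ^ q - σ ^ q * φ n x ^ q) μ :=
      fun n => (((hIP n).const_mul _).add ((hIG n).const_mul _)).sub ((hIphiq n).const_mul _)
    have hSLeq : ∀ n, ∫ x, (q * σ * (φ n x * max (trMax μ T (φ n) x) L ^ (q - 1))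
          + (1 - q) * max (trMax μ T (φ n) x) L ^ q - σ ^ q * φ n x ^ q) ∂μ
        = q * σ * (∫ x, φ n x * max (trMax μ T (φ n) x) L ^ (q - 1) ∂μ)
          + (1 - q) * (∫ x, max (trMax μ T (φ n) x) L ^ q ∂μ) - σ ^ q * h := by
      intro n
      have hA : Integrable (fun x => q * σ * (φ n x * max (trMax μ T (φ n) x) L ^ (q - 1))
          + (1 - q) * max (trMax μ T (φ n) x) L ^ q) μ :=
        ((hIP n).const_mul _).add ((hIG n).const_mul _)
      rw [integral_sub hA ((hIphiq n).const_mul _),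
        integral_add ((hIP n).const_mul _) ((hIG n).const_mul _),
        integral_const_mul, integral_const_mul, integral_const_mul, hhn n]
    have hptnn : ∀ n x, 0 ≤ q * σ * (φ n x * max (trMax μ T (φ n) x) L ^ (q - 1))
        + (1 - q) * max (trMax μ T (φ n) x) L ^ q - σ ^ q * φ n x ^ q := by
      intro n x
      have key := Stmt1Aux.amgm hq0 hq1 (r := σ * φ n x)
        (κ := max (trMax μ T (φ n) x) L) (mul_nonneg hσ0.le (h0 n x)) (hGpos n x)
      rw [Real.mul_rpow hσ0.le (h0 n x)] at key
      nlinarith [key]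
    have hSLnn : ∀ n, 0 ≤ ∫ x, (q * σ * (φ n x * max (trMax μ T (φ n) x) L ^ (q - 1))
        + (1 - q) * max (trMax μ T (φ n) x) L ^ q - σ ^ q * φ n x ^ q) ∂μ :=
      fun n => integral_nonneg (fun x => hptnn n x)
    have hSLle : ∀ n, ∫ x, (q * σ * (φ n x * max (trMax μ T (φ n) x) L ^ (q - 1))
          + (1 - q) * max (trMax μ T (φ n) x) L ^ q - σ ^ q * φ n x ^ q) ∂μ
        ≤ σ * ((1 - q) * L ^ q + q * L ^ (q - 1) * f
            - (1 - q) * (∫ x, max (trMax μ T (φ n) x) L ^ q ∂μ))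
          + (1 - q) * (∫ x, max (trMax μ T (φ n) x) L ^ q ∂μ) - σ ^ q * h := by
      intro n
      rw [hSLeq n]
      have h2 := hineq n
      have h3 : q * (∫ x, φ n x * max (trMax μ T (φ n) x) L ^ (q - 1) ∂μ)
          ≤ (1 - q) * L ^ q + q * L ^ (q - 1) * f
            - (1 - q) * (∫ x, max (trMax μ T (φ n) x) L ^ q ∂μ) := by linarith
      nlinarith [mul_le_mul_of_nonneg_left h3 hσ0.le]
    have hB : Tendsto (fun n => σ * ((1 - q) * L ^ q + q * L ^ (q - 1) * f
          - (1 - q) * (∫ x, max (trMax μ T (φ n) x) L ^ q ∂μ))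
        + (1 - q) * (∫ x, max (trMax μ T (φ n) x) L ^ q ∂μ) - σ ^ q * h) atTop
        (nhds (σ * ((1 - q) * L ^ q + q * L ^ (q - 1) * f
            - (1 - q) * (h * bellC q f h L))
          + (1 - q) * (h * bellC q f h L) - σ ^ q * h)) :=
      (((tendsto_const_nhds.sub (h1.const_mul (1 - q))).const_mul σ).add
        (h1.const_mul (1 - q))).sub tendsto_const_nhds
    have hzero : σ * ((1 - q) * L ^ q + q * L ^ (q - 1) * f - (1 - q) * (h * bellC q f h L))
        + (1 - q) * (h * bellC q f h L) - σ ^ q * h = 0 := by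
      rw [hcdef, hBz]
      linear_combination h * q * hσq
    rw [hzero] at hB
    have hSL0 : Tendsto (fun n => ∫ x, (q * σ * (φ n x * max (trMax μ T (φ n) x) L ^ (q - 1))
        + (1 - q) * max (trMax μ T (φ n) x) L ^ q - σ ^ q * φ n x ^ q) ∂μ) atTop (nhds 0) :=
      squeeze_zero hSLnn hSLle hB
    -- final ε-argument
    rw [Metric.tendsto_atTop]
    intro eps heps
    have hA : 0 < h * bellC q f h L + 1 := by nlinarith [mul_pos hh hcpos]
    have heps'0 : 0 < eps / (2 * (h * bellC q f h L + 1)) := by positivity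
    obtain ⟨C, hC0, hCb⟩ := Stmt1Aux.exists_gbound hq0 hq1 heps'0
    have hptD : ∀ n x, |max (trMax μ T (φ n) x) L - σ * φ n x| ^ q
        ≤ eps / (2 * (h * bellC q f h L + 1)) * max (trMax μ T (φ n) x) L ^ q
          + C * (q * σ * (φ n x * max (trMax μ T (φ n) x) L ^ (q - 1))
            + (1 - q) * max (trMax μ T (φ n) x) L ^ q - σ ^ q * φ n x ^ q) := by
      intro n x
      have hGne : max (trMax μ T (φ n) x) L ≠ 0 := (hGpos n x).ne'
      have hw0 : 0 ≤ σ * φ n x / max (trMax μ T (φ n) x) L :=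
        div_nonneg (mul_nonneg hσ0.le (h0 n x)) (hGpos n x).le
      have hkey := hCb _ hw0
      have hGq0 : 0 < max (trMax μ T (φ n) x) L ^ q := Real.rpow_pos_of_pos (hGpos n x) _
      have e1 : |max (trMax μ T (φ n) x) L - σ * φ n x| ^ q
          = max (trMax μ T (φ n) x) L ^ q
            * |1 - σ * φ n x / max (trMax μ T (φ n) x) L| ^ q := by
        have e0 : max (trMax μ T (φ n) x) L - σ * φ n x
            = max (trMax μ T (φ n) x) L * (1 - σ * φ n x / max (trMax μ T (φ n) x) L) := by
          field_simp
        rw [e0, abs_mul, abs_of_nonneg (hGpos n x).le,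
          Real.mul_rpow (hGpos n x).le (abs_nonneg _)]
      have hG1 : σ * φ n x / max (trMax μ T (φ n) x) L * max (trMax μ T (φ n) x) L ^ q
          = σ * (φ n x * max (trMax μ T (φ n) x) L ^ (q - 1)) := by
        rw [Real.rpow_sub (hGpos n x) q 1, Real.rpow_one]
        field_simp
      have hG2 : (σ * φ n x / max (trMax μ T (φ n) x) L) ^ q
          * max (trMax μ T (φ n) x) L ^ q = σ ^ q * φ n x ^ q := by
        rw [Real.div_rpow (mul_nonneg hσ0.le (h0 n x)) (hGpos n x).le,
          Real.mul_rpow hσ0.le (h0 n x)]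
        field_simp
      have e2 : max (trMax μ T (φ n) x) L ^ q
            * Stmt1Aux.gfun q (σ * φ n x / max (trMax μ T (φ n) x) L)
          = q * σ * (φ n x * max (trMax μ T (φ n) x) L ^ (q - 1))
            + (1 - q) * max (trMax μ T (φ n) x) L ^ q - σ ^ q * φ n x ^ q := by
        simp only [Stmt1Aux.gfun]
        linear_combination (q : ℝ) * hG1 - hG2
      calc |max (trMax μ T (φ n) x) L - σ * φ n x| ^ q
          = max (trMax μ T (φ n) x) L ^ q
            * |1 - σ * φ n x / max (trMax μ T (φ n) x) L| ^ q := e1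
        _ ≤ max (trMax μ T (φ n) x) L ^ q
            * (eps / (2 * (h * bellC q f h L + 1))
              + C * Stmt1Aux.gfun q (σ * φ n x / max (trMax μ T (φ n) x) L)) :=
            mul_le_mul_of_nonneg_left hkey hGq0.le
        _ = eps / (2 * (h * bellC q f h L + 1)) * max (trMax μ T (φ n) x) L ^ q
            + C * (max (trMax μ T (φ n) x) L ^ q
              * Stmt1Aux.gfun q (σ * φ n x / max (trMax μ T (φ n) x) L)) := by ring
        _ = _ := by rw [e2]
    have hDle : ∀ n, ∫ x, |max (trMax μ T (φ n) x) L - σ * φ n x| ^ q ∂μ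
        ≤ eps / (2 * (h * bellC q f h L + 1)) * (∫ x, max (trMax μ T (φ n) x) L ^ q ∂μ)
          + C * ∫ x, (q * σ * (φ n x * max (trMax μ T (φ n) x) L ^ (q - 1))
            + (1 - q) * max (trMax μ T (φ n) x) L ^ q - σ ^ q * φ n x ^ q) ∂μ := by
      intro n
      have hint2 : Integrable (fun x =>
          eps / (2 * (h * bellC q f h L + 1)) * max (trMax μ T (φ n) x) L ^ q
            + C * (q * σ * (φ n x * max (trMax μ T (φ n) x) L ^ (q - 1))
              + (1 - q) * max (trMax μ T (φ n) x) L ^ q - σ ^ q * φ n x ^ q)) μ :=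
        ((hIG n).const_mul _).add ((hSLint n).const_mul _)
      have hmono := integral_mono (hIabs n) hint2 (fun x => hptD n x)
      calc ∫ x, |max (trMax μ T (φ n) x) L - σ * φ n x| ^ q ∂μ ≤ _ := hmono
        _ = _ := by
            have hA : Integrable (fun x =>
                eps / (2 * (h * bellC q f h L + 1)) * max (trMax μ T (φ n) x) L ^ q) μ :=
              (hIG n).const_mul _
            have hB' : Integrable (fun x =>
                C * (q * σ * (φ n x * max (trMax μ T (φ n) x) L ^ (q - 1))
                  + (1 - q) * max (trMax μ T (φ n) x) L ^ q - σ ^ q * φ n x ^ q)) μ :=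
              (hSLint n).const_mul _
            rw [integral_add hA hB', integral_const_mul, integral_const_mul]
    have hRHSlim : Tendsto (fun n =>
        eps / (2 * (h * bellC q f h L + 1)) * (∫ x, max (trMax μ T (φ n) x) L ^ q ∂μ)
          + C * ∫ x, (q * σ * (φ n x * max (trMax μ T (φ n) x) L ^ (q - 1))
            + (1 - q) * max (trMax μ T (φ n) x) L ^ q - σ ^ q * φ n x ^ q) ∂μ) atTop
        (nhds (eps / (2 * (h * bellC q f h L + 1)) * (h * bellC q f h L) + C * 0)) :=
      (h1.const_mul _).add (hSL0.const_mul C)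
    rw [mul_zero, add_zero] at hRHSlim
    have hlt : eps / (2 * (h * bellC q f h L + 1)) * (h * bellC q f h L) < eps := by
      rw [div_mul_eq_mul_div, div_lt_iff₀ (by positivity)]
      nlinarith [mul_pos hh hcpos]
    have hev := hRHSlim.eventually_lt_const hlt
    obtain ⟨N, hN⟩ := eventually_atTop.1 hev
    refine ⟨N, fun n hn => ?_⟩
    rw [Real.dist_eq, sub_zero, abs_of_nonneg
      (integral_nonneg (fun x => Real.rpow_nonneg (abs_nonneg _) _))]
    exact lt_of_le_of_lt (hDle n) (hN n hn)
  · -- easy direction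
    intro h2
    have hsq : Tendsto (fun n => (∫ x, max (trMax μ T (φ n) x) L ^ q ∂μ) - h * bellC q f h L)
        atTop (nhds 0) := by
      apply squeeze_zero_norm _ h2
      intro n
      rw [Real.norm_eq_abs]
      exact habs_bound n
    have := hsq.add_const (h * bellC q f h L)
    simpa using this


end
end

section
/- Let (X,μ) be a nonatomic probability space and T a tree on X. Then for every I ∈ T and every α ∈ (0,1) there exists a subfamily F(I) ⊆ T consisting of pairwise disjoint subsets of I such that μ(∪_{J ∈ F(I)} J) = Σ_{J ∈ F(I)} μ(J) = (1−α)·μ(I). -/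
open MeasureTheory Filter Set
open scoped ENNReal

noncomputable section

variable {X : Type*} [MeasurableSpace X]

lemma greedy_sel {β : Type*} (C : Set β) (hC : C.Countable) (w : β → ℝ≥0∞)
    (s t : ℝ≥0∞) (hst : s ≤ t) :
    ∃ G ⊆ C, s + ∑' J : G, w J ≤ t ∧
      (G = C ∨ ∃ K ∈ C, K ∉ G ∧ t < s + (∑' J : G, w J) + w K) := by
  classical
  rcases C.eq_empty_or_nonempty with hne | hne
  · refine ⟨∅, by simp, ?_, Or.inl hne.symm⟩
    simp [hst]
  obtain ⟨e, he⟩ := hC.exists_eq_range hne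
  -- greedy selection of indices
  let g : ℕ → Finset ℕ := fun n => Nat.rec ∅
    (fun k acc => if (∀ i < k, e i ≠ e k) ∧ s + (∑ i ∈ acc, w (e i)) + w (e k) ≤ t
      then insert k acc else acc) n
  have hg0 : g 0 = ∅ := rfl
  have hgs : ∀ k, g (k+1) = if (∀ i < k, e i ≠ e k) ∧ s + (∑ i ∈ g k, w (e i)) + w (e k) ≤ t
      then insert k (g k) else g k := fun k => rfl
  -- f1 : members are < n
  have f1 : ∀ n, ∀ i ∈ g n, i < n := by
    intro n
    induction n with
    | zero => simp [hg0]
    | succ k ih =>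
      intro i hi
      rw [hgs] at hi
      split_ifs at hi with h
      · rcases Finset.mem_insert.1 hi with rfl | hi
        · omega
        · exact Nat.lt_succ_of_lt (ih i hi)
      · exact Nat.lt_succ_of_lt (ih i hi)
  have f2 : ∀ n m, n ≤ m → g n ⊆ g m := by
    intro n m hnm
    induction m with
    | zero => have h0 : n = 0 := Nat.le_zero.mp hnm; subst h0; exact subset_rfl
    | succ k ih =>
      rcases Nat.lt_or_ge n (k+1) with h | h
      · have := ih (by omega)
        rw [hgs]
        split_ifs
        · exact this.trans (Finset.subset_insert _ _)
        · exact this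
      · have : n = k + 1 := by omega
        subst this; exact subset_rfl
  have f3 : ∀ n i, i ∈ g n → i ∈ g (i+1) := by
    intro n
    induction n with
    | zero => simp [hg0]
    | succ k ih =>
      intro i hi
      rw [hgs] at hi
      split_ifs at hi with h
      · rcases Finset.mem_insert.1 hi with rfl | hi
        · rw [hgs, if_pos h]; exact Finset.mem_insert_self _ _
        · exact ih i hi
      · exact ih i hi
  have f4 : ∀ n, s + ∑ i ∈ g n, w (e i) ≤ t := by
    intro n
    induction n with
    | zero => simpa [hg0] using hst
    | succ k ih =>
      rw [hgs]
      split_ifs with h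
      · have hk : k ∉ g k := fun hk => lt_irrefl k (f1 k k hk)
        rw [Finset.sum_insert hk]
        calc s + (w (e k) + ∑ i ∈ g k, w (e i)) 
            = s + (∑ i ∈ g k, w (e i)) + w (e k) := by ring
          _ ≤ t := h.2
      · exact ih
  set Sel : Set ℕ := {n | n ∈ g (n+1)} with hSel
  have hfo : ∀ n ∈ Sel, ∀ i < n, e i ≠ e n := by
    intro n hn
    have : n ∈ g (n+1) := hn
    rw [hgs] at this
    split_ifs at this with h
    · exact h.1
    · exact absurd (f1 n n this) (lt_irrefl n)
  have hinj : Set.InjOn e Sel := by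
    intro a ha b hb hab
    by_contra hne'
    rcases Nat.lt_or_ge a b with h | h
    · exact hfo b hb a h hab
    · exact hfo a ha b (by omega) hab.symm
  refine ⟨e '' Sel, ?_, ?_, ?_⟩
  · rintro _ ⟨n, _, rfl⟩; rw [he]; exact ⟨n, rfl⟩
  · -- sum bound
    rw [tsum_image w hinj]
    rw [tsum_subtype Sel (fun n => w (e n)), ENNReal.tsum_eq_iSup_sum, ENNReal.add_iSup]
    apply iSup_le
    intro F
    have : ∑ i ∈ F, Sel.indicator (fun n => w (e n)) i
        ≤ ∑ i ∈ g (F.sup id + 1), w (e i) := by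
      rw [← Finset.sum_filter_add_sum_filter_not F (· ∈ Sel)]
      have h1 : ∑ i ∈ F.filter (· ∉ Sel), Sel.indicator (fun n => w (e n)) i = 0 := by
        apply Finset.sum_eq_zero
        intro i hi
        simp only [Finset.mem_filter] at hi
        exact Set.indicator_of_notMem hi.2 _
      rw [h1, add_zero]
      have h2 : ∀ i ∈ F.filter (· ∈ Sel), Sel.indicator (fun n => w (e n)) i = w (e i) := by
        intro i hi
        simp only [Finset.mem_filter] at hi
        exact Set.indicator_of_mem hi.2 _
      rw [Finset.sum_congr rfl h2]
      apply Finset.sum_le_sum_of_subset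
      intro i hi
      simp only [Finset.mem_filter] at hi
      have hiF : i ≤ F.sup id := Finset.le_sup (f := id) hi.1
      exact f2 (i+1) (F.sup id + 1) (by omega) hi.2
    calc s + ∑ i ∈ F, Sel.indicator (fun n => w (e n)) i
        ≤ s + ∑ i ∈ g (F.sup id + 1), w (e i) := add_le_add_right this s
      _ ≤ t := f4 (F.sup id + 1)
  · by_cases hGC : e '' Sel = C
    · exact Or.inl hGC
    right
    have hsub : e '' Sel ⊆ C := by rintro _ ⟨n, _, rfl⟩; rw [he]; exact ⟨n, rfl⟩
    obtain ⟨K, hKC, hKG⟩ : ∃ K ∈ C, K ∉ e '' Sel := by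
      by_contra h
      push_neg at h
      exact hGC (hsub.antisymm h)
    refine ⟨K, hKC, hKG, ?_⟩
    have hex : ∃ n, e n = K := by rw [he] at hKC; exact ⟨hKC.choose, hKC.choose_spec⟩
    set n0 := Nat.find hex with hn0
    have hen0 : e n0 = K := Nat.find_spec hex
    have hfo0 : ∀ i < n0, e i ≠ e n0 := by
      intro i hi hcontra
      exact Nat.find_min hex hi (hcontra.trans hen0)
    have hn0sel : n0 ∉ Sel := by
      intro h
      exact hKG ⟨n0, h, hen0⟩
    have hn0g : n0 ∉ g (n0 + 1) := hn0sel
    rw [hgs] at hn0g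
    have hcond : ¬ ((∀ i < n0, e i ≠ e n0) ∧ s + (∑ i ∈ g n0, w (e i)) + w (e n0) ≤ t) := by
      intro h
      rw [if_pos h] at hn0g
      exact hn0g (Finset.mem_insert_self _ _)
    have hlt : t < s + (∑ i ∈ g n0, w (e i)) + w (e n0) := by
      by_contra h
      push_neg at h
      exact hcond ⟨hfo0, h⟩
    have hle : ∑ i ∈ g n0, w (e i) ≤ ∑' J : (e '' Sel), w J := by
      rw [tsum_image w hinj, tsum_subtype Sel (fun n => w (e n))]
      calc ∑ i ∈ g n0, w (e i) = ∑ i ∈ g n0, Sel.indicator (fun n => w (e n)) i := by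
            apply Finset.sum_congr rfl
            intro i hi
            have hiSel : i ∈ Sel := by rw [hSel]; exact f3 n0 i hi
            exact (Set.indicator_of_mem hiSel (fun n => w (e n))).symm
        _ ≤ _ := ENNReal.sum_le_tsum _
    calc t < s + (∑ i ∈ g n0, w (e i)) + w (e n0) := hlt
      _ ≤ s + (∑' J : (e '' Sel), w J) + w K := by
          rw [hen0]
          exact add_le_add_left (add_le_add_right hle s) _


lemma step_lemma {X : Type*} [MeasurableSpace X] (μ : Measure X) (T : DTree X μ)
    (lvl : ℕ → Set (Set X)) (hsucc : ∀ m, lvl (m + 1) = ⋃ I ∈ lvl m, T.child I)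
    (hlm : ∀ m, lvl m ⊆ T.mem) (hcnt : T.mem.Countable)
    (I : Set X) (t : ℝ≥0∞) (htI : t ≤ μ I) (n : ℕ)
    (S R : Set (Set X))
    (hS : S ⊆ T.mem) (hR : R ⊆ lvl n)
    (hSI : ∀ J ∈ S, J ⊆ I) (hRI : ∀ J ∈ R, J ⊆ I)
    (hSd : S.Pairwise Disjoint) (hRd : R.Pairwise Disjoint)
    (hSR : ∀ a ∈ S, ∀ b ∈ R, Disjoint a b)
    (hU : ⋃₀ S ∪ ⋃₀ R = I)
    (hle : μ (⋃₀ S) ≤ t) :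
    ∃ S' R' : Set (Set X), S ⊆ S' ∧ S' ⊆ T.mem ∧ R' ⊆ lvl (n + 1) ∧
      (∀ J ∈ S', J ⊆ I) ∧ (∀ J ∈ R', J ⊆ I) ∧
      S'.Pairwise Disjoint ∧ R'.Pairwise Disjoint ∧
      (∀ a ∈ S', ∀ b ∈ R', Disjoint a b) ∧
      ⋃₀ S' ∪ ⋃₀ R' = I ∧
      μ (⋃₀ S') ≤ t ∧ t ≤ μ (⋃₀ S') + ⨆ J ∈ lvl (n + 1), μ J := by
  classical
  have hRmem : R ⊆ T.mem := hR.trans (hlm n)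
  set C : Set (Set X) := ⋃ K ∈ R, T.child K with hC
  have hmemC : ∀ J, J ∈ C ↔ ∃ K ∈ R, J ∈ T.child K := by
    intro J; rw [hC]; simp
  have hCmem : C ⊆ T.mem := by
    intro J hJ
    obtain ⟨K, hK, hJK⟩ := (hmemC J).1 hJ
    exact T.child_sub_mem K (hRmem hK) hJK
  have hClvl : C ⊆ lvl (n + 1) := by
    rw [hsucc n, hC]
    exact Set.iUnion₂_mono' (fun K hK => ⟨K, hR hK, subset_rfl⟩)
  have hCcnt : C.Countable := hcnt.mono hCmem
  have hCsubR : ∀ J ∈ C, ∃ K ∈ R, J ⊆ K := by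
    intro J hJ
    obtain ⟨K, hK, hJK⟩ := (hmemC J).1 hJ
    exact ⟨K, hK, T.child_sub K (hRmem hK) J hJK⟩
  have hCI : ∀ J ∈ C, J ⊆ I := by
    intro J hJ
    obtain ⟨K, hK, hJK⟩ := hCsubR J hJ
    exact hJK.trans (hRI K hK)
  have hCd : C.Pairwise Disjoint := by
    intro a ha b hb hab
    obtain ⟨Ka, hKa, haK⟩ := (hmemC a).1 ha
    obtain ⟨Kb, hKb, hbK⟩ := (hmemC b).1 hb
    by_cases hKab : Ka = Kb
    · subst hKab
      exact T.child_disj Ka (hRmem hKa) haK hbK hab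
    · exact Disjoint.mono (T.child_sub Ka (hRmem hKa) a haK)
        (T.child_sub Kb (hRmem hKb) b hbK) (hRd hKa hKb hKab)
  have hCU : ⋃₀ C = ⋃₀ R := by
    apply subset_antisymm
    · intro x hx
      obtain ⟨J, hJ, hxJ⟩ := hx
      obtain ⟨K, hK, hJK⟩ := hCsubR J hJ
      exact ⟨K, hK, hJK hxJ⟩
    · intro x hx
      obtain ⟨K, hK, hxK⟩ := hx
      rw [← T.child_union K (hRmem hK)] at hxK
      obtain ⟨J, hJ, hxJ⟩ := hxK
      exact ⟨J, (hmemC J).2 ⟨K, hK, hJ⟩, hxJ⟩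
  have hCS : ∀ a ∈ S, ∀ b ∈ C, Disjoint a b := by
    intro a ha b hb
    obtain ⟨K, hK, hbK⟩ := hCsubR b hb
    exact (hSR a ha K hK).mono_right hbK
  obtain ⟨G, hGC, hGsum, hGcase⟩ := greedy_sel C hCcnt (fun J => μ J) (μ (⋃₀ S)) t hle
  have hGcnt : G.Countable := hCcnt.mono hGC
  have hGmeas : ∀ J ∈ G, MeasurableSet J := fun J hJ => T.meas J (hCmem (hGC hJ))
  have hGd : G.Pairwise Disjoint := hCd.mono hGC
  have hGmU : μ (⋃₀ G) = ∑' J : G, μ (J : Set X) := measure_sUnion hGcnt hGd hGmeas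
  have hdisjSG : Disjoint (⋃₀ S) (⋃₀ G) := by
    rw [Set.disjoint_sUnion_left]
    intro a ha
    rw [Set.disjoint_sUnion_right]
    exact fun b hb => hCS a ha b (hGC hb)
  have hWS' : μ (⋃₀ (S ∪ G)) = μ (⋃₀ S) + ∑' J : G, μ (J : Set X) := by
    rw [Set.sUnion_union, measure_union hdisjSG (MeasurableSet.sUnion hGcnt hGmeas), hGmU]
  refine ⟨S ∪ G, C \ G, Set.subset_union_left, ?_, (Set.diff_subset).trans hClvl, ?_, ?_, ?_,
    hCd.mono Set.diff_subset, ?_, ?_, ?_, ?_⟩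
  · exact Set.union_subset hS (hGC.trans hCmem)
  · intro J hJ
    rcases hJ with hJ | hJ
    · exact hSI J hJ
    · exact hCI J (hGC hJ)
  · exact fun J hJ => hCI J hJ.1
  · intro a ha b hb hab
    rcases ha with ha | ha <;> rcases hb with hb | hb
    · exact hSd ha hb hab
    · exact hCS a ha b (hGC hb)
    · exact (hCS b hb a (hGC ha)).symm
    · exact hGd ha hb hab
  · intro a ha b hb
    rcases ha with ha | ha
    · exact hCS a ha b hb.1
    · exact hCd (hGC ha) hb.1 (fun h => hb.2 (h ▸ ha))
  · rw [Set.sUnion_union, Set.union_assoc, ← Set.sUnion_union,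
      Set.union_diff_cancel hGC, hCU, hU]
  · rw [hWS']; exact hGsum
  · rcases hGcase with hGeq | ⟨K, hKC, hKG, hlt⟩
    · have : ⋃₀ (S ∪ G) = I := by
        rw [Set.sUnion_union, hGeq, hCU, hU]
      rw [this]
      exact le_add_right htI
    · have hKey : t < μ (⋃₀ (S ∪ G)) + μ K := by
        rw [hWS']; exact hlt
      have hKb : μ K ≤ ⨆ J ∈ lvl (n + 1), μ J := le_biSup _ (hClvl hKC)
      exact le_of_lt (hKey.trans_le (add_le_add_right hKb _))

/-- for every `I ∈ T` and `α ∈ (0,1)` there is a pairwise disjoint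
subfamily of `T` consisting of subsets of `I` of total measure `(1-α)μ(I)`. -/
theorem statement2 {X : Type*} [MeasurableSpace X] (μ : Measure X)
    [IsProbabilityMeasure μ] [NullSingletonClass μ] (T : DTree X μ)
    (I : Set X) (hI : I ∈ T.mem) (α : ℝ) (hα : α ∈ Set.Ioo (0 : ℝ) 1) :
    ∃ F : Set (Set X), F ⊆ T.mem ∧ (∀ J ∈ F, J ⊆ I) ∧ F.Pairwise Disjoint ∧
      μ (⋃₀ F) = ∑' J : F, μ (J : Set X) ∧
      μ (⋃₀ F) = ENNReal.ofReal (1 - α) * μ I := by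
  classical
  obtain ⟨lvl, h0, hsucc, hmem, htend⟩ := T.generated
  have hlm : ∀ m, lvl m ⊆ T.mem := by
    intro m J hJ
    rw [hmem]
    exact Set.mem_iUnion.2 ⟨m, hJ⟩
  have hlcnt : ∀ m, (lvl m).Countable := by
    intro m
    induction m with
    | zero => rw [h0]; exact Set.countable_singleton _
    | succ k ih =>
      rw [hsucc k]
      exact ih.biUnion (fun J hJ => T.child_countable J (hlm k hJ))
  have hcnt : T.mem.Countable := by
    rw [hmem]; exact Set.countable_iUnion hlcnt
  obtain ⟨m0, hm0⟩ : ∃ m0, I ∈ lvl m0 := by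
    rw [hmem] at hI
    exact Set.mem_iUnion.1 hI
  set t : ℝ≥0∞ := ENNReal.ofReal (1 - α) * μ I with ht
  have htI : t ≤ μ I := by
    calc t ≤ 1 * μ I := by
          exact mul_le_mul_left (ENNReal.ofReal_le_one.2 (by linarith [hα.1])) _
      _ = μ I := one_mul _
  set Inv : ℕ → Set (Set X) × Set (Set X) → Prop := fun m p =>
    p.1 ⊆ T.mem ∧ p.2 ⊆ lvl (m0 + m) ∧ (∀ J ∈ p.1, J ⊆ I) ∧ (∀ J ∈ p.2, J ⊆ I) ∧
    p.1.Pairwise Disjoint ∧ p.2.Pairwise Disjoint ∧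
    (∀ a ∈ p.1, ∀ b ∈ p.2, Disjoint a b) ∧
    ⋃₀ p.1 ∪ ⋃₀ p.2 = I ∧ μ (⋃₀ p.1) ≤ t ∧
    t ≤ μ (⋃₀ p.1) + ⨆ J ∈ lvl (m0 + m), μ J with hInvDef
  have hbase : Inv 0 (∅, {I}) := by
    refine ⟨by simp, ?_, by simp, by simp, ?_, ?_, by simp, ?_, by simp, ?_⟩
    · intro J hJ
      rw [Set.mem_singleton_iff] at hJ
      subst hJ
      simpa using hm0
    · simp
    · exact Set.pairwise_singleton _ _
    · simp
    · have : μ (⋃₀ (∅ : Set (Set X))) = 0 := by simp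
      rw [this, zero_add]
      exact htI.trans (le_biSup _ (by simpa using hm0))
  have hstep : ∀ m p, Inv m p → ∃ q : Set (Set X) × Set (Set X), Inv (m + 1) q ∧ p.1 ⊆ q.1 := by
    intro m p hp
    obtain ⟨hS, hR, hSI, hRI, hSd, hRd, hSR, hU, hle, _⟩ := hp
    obtain ⟨S', R', hsub, h1, h2, h3, h4, h5, h6, h7, h8, h9, h10⟩ :=
      step_lemma μ T lvl hsucc hlm hcnt I t htI (m0 + m) p.1 p.2
        hS hR hSI hRI hSd hRd hSR hU hle
    exact ⟨(S', R'), ⟨h1, h2, h3, h4, h5, h6, h7, h8, h9, h10⟩, hsub⟩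
  have total : ∀ m p, ∃ q : Set (Set X) × Set (Set X),
      Inv m p → (Inv (m + 1) q ∧ p.1 ⊆ q.1) := by
    intro m p
    by_cases h : Inv m p
    · obtain ⟨q, hq⟩ := hstep m p h
      exact ⟨q, fun _ => hq⟩
    · exact ⟨p, fun h' => absurd h' h⟩
  choose nxt hnxt using total
  set seq : ℕ → Set (Set X) × Set (Set X) :=
    fun m => Nat.rec ((∅ : Set (Set X)), ({I} : Set (Set X))) (fun k q => nxt k q) m with hseqdef
  have hseq : ∀ m, seq (m + 1) = nxt m (seq m) := fun m => rfl
  have hInv : ∀ m, Inv m (seq m) := by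
    intro m
    induction m with
    | zero => exact hbase
    | succ k ih =>
      rw [hseq]
      exact (hnxt k (seq k) ih).1
  have hmono : ∀ m, (seq m).1 ⊆ (seq (m + 1)).1 := by
    intro m
    rw [hseq]
    exact (hnxt m (seq m) (hInv m)).2
  have hmono' : ∀ m n, m ≤ n → (seq m).1 ⊆ (seq n).1 := by
    intro m n hmn
    induction n with
    | zero =>
      have : m = 0 := Nat.le_zero.mp hmn
      subst this; exact subset_rfl
    | succ k ih =>
      rcases Nat.lt_or_ge m (k + 1) with h | h
      · exact (ih (by omega)).trans (hmono k)
      · have : m = k + 1 := by omega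
        subst this; exact subset_rfl
  refine ⟨⋃ m, (seq m).1, ?_, ?_, ?_, ?_, ?_⟩
  · exact Set.iUnion_subset fun m => (hInv m).1
  · intro J hJ
    obtain ⟨m, hm⟩ := Set.mem_iUnion.1 hJ
    exact (hInv m).2.2.1 J hm
  · intro a ha b hb hab
    obtain ⟨ma, hma⟩ := Set.mem_iUnion.1 ha
    obtain ⟨mb, hmb⟩ := Set.mem_iUnion.1 hb
    have ham : a ∈ (seq (max ma mb)).1 := hmono' ma _ (le_max_left _ _) hma
    have hbm : b ∈ (seq (max ma mb)).1 := hmono' mb _ (le_max_right _ _) hmb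
    exact (hInv (max ma mb)).2.2.2.2.1 ham hbm hab
  · apply measure_sUnion
    · exact hcnt.mono (Set.iUnion_subset fun m => (hInv m).1)
    · intro a ha b hb hab
      obtain ⟨ma, hma⟩ := Set.mem_iUnion.1 ha
      obtain ⟨mb, hmb⟩ := Set.mem_iUnion.1 hb
      have ham : a ∈ (seq (max ma mb)).1 := hmono' ma _ (le_max_left _ _) hma
      have hbm : b ∈ (seq (max ma mb)).1 := hmono' mb _ (le_max_right _ _) hmb
      exact (hInv (max ma mb)).2.2.2.2.1 ham hbm hab
    · intro J hJ
      obtain ⟨m, hm⟩ := Set.mem_iUnion.1 hJ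
      exact T.meas J ((hInv m).1 hm)
  · have hUe : ⋃₀ (⋃ m, (seq m).1) = ⋃ m, ⋃₀ (seq m).1 := Set.sUnion_iUnion _
    rw [hUe]
    have hdir : Monotone (fun m => ⋃₀ (seq m).1) := by
      intro m n hmn
      exact Set.sUnion_mono (hmono' m n hmn)
    rw [hdir.directed_le.measure_iUnion]
    apply le_antisymm
    · exact iSup_le fun m => (hInv m).2.2.2.2.2.2.2.2.1
    · apply ENNReal.le_of_forall_pos_le_add
      intro ε hε _
      have hev : ∀ᶠ m in atTop, (⨆ J ∈ lvl m, μ J) < (ε : ℝ≥0∞) := by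
        apply htend.eventually_lt_const
        exact ENNReal.coe_pos.2 hε
      obtain ⟨N, hN⟩ := hev.exists_forall_of_atTop
      have hNb : (⨆ J ∈ lvl (m0 + N), μ J) < (ε : ℝ≥0∞) := hN _ (by omega)
      calc t ≤ μ (⋃₀ (seq N).1) + ⨆ J ∈ lvl (m0 + N), μ J :=
            (hInv N).2.2.2.2.2.2.2.2.2
        _ ≤ (⨆ m, μ (⋃₀ (seq m).1)) + (ε : ℝ≥0∞) :=
            add_le_add (le_iSup (fun m => μ (⋃₀ (seq m).1)) N) hNb.le

end
end

section
/- Let (X,μ) be a nonatomic probability space, T a tree on X, and φ a T-good function. Let I ∈ T with I ≠ X. Then I ∈ S_φ if and only if every J ∈ T that properly contains I satisfies Av_J(φ) < Av_I(φ). -/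
open MeasureTheory Filter Set

noncomputable section

variable {X : Type*} [MeasurableSpace X]

/-- Structural facts about a tree: countability, nestedness, existence of maximal elements. -/
theorem DTree.structure_facts {μ : Measure X} (T : DTree X μ) :
    T.mem.Countable ∧ (∀ I ∈ T.mem, ∀ J ∈ T.mem, (I ∩ J).Nonempty → I ⊆ J ∨ J ⊆ I) ∧
    (∀ 𝒞 ⊆ T.mem, ∀ K ∈ 𝒞, K.Nonempty →
      ∃ Km ∈ 𝒞, K ⊆ Km ∧ ∀ K' ∈ 𝒞, Km ⊆ K' → Km = K') := by
  classical
  obtain ⟨lvl, hl0, hls, hlm, -⟩ := T.generated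
  have hsub : ∀ n, lvl n ⊆ T.mem := by
    intro n I hI
    rw [hlm]; exact mem_iUnion.2 ⟨n, hI⟩
  have hcnt : ∀ n, (lvl n).Countable := by
    intro n
    induction n with
    | zero => rw [hl0]; exact countable_singleton _
    | succ n ih =>
      rw [hls]
      exact ih.biUnion fun I hI => T.child_countable I (hsub n hI)
  have hsame : ∀ n, ∀ I ∈ lvl n, ∀ J ∈ lvl n, (I ∩ J).Nonempty → I = J := by
    intro n
    induction n with
    | zero =>
      intro I hI J hJ _
      rw [hl0] at hI hJ
      rw [mem_singleton_iff] at hI hJ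
      rw [hI, hJ]
    | succ n ih =>
      intro I hI J hJ ⟨x, hxI, hxJ⟩
      rw [hls] at hI hJ
      obtain ⟨I₁, hI₁, hIc⟩ := mem_iUnion₂.1 hI
      obtain ⟨J₁, hJ₁, hJc⟩ := mem_iUnion₂.1 hJ
      have hI₁m := hsub n hI₁
      have hJ₁m := hsub n hJ₁
      have h11 : I₁ = J₁ :=
        ih I₁ hI₁ J₁ hJ₁ ⟨x, T.child_sub I₁ hI₁m I hIc hxI, T.child_sub J₁ hJ₁m J hJc hxJ⟩
      subst h11
      by_contra hne
      exact Set.disjoint_left.1 (T.child_disj I₁ hI₁m hIc hJc hne) hxI hxJ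
  have hnest : ∀ m n, m ≤ n → ∀ I ∈ lvl m, ∀ J ∈ lvl n, (I ∩ J).Nonempty → J ⊆ I := by
    intro m n
    induction n with
    | zero =>
      intro hmn I hI J hJ hIJ
      have hm0 : m = 0 := Nat.le_zero.1 hmn
      subst hm0
      exact (hsame 0 I hI J hJ hIJ) ▸ Set.Subset.rfl
    | succ n ih =>
      intro hmn I hI J hJ hIJ
      rcases Nat.lt_or_ge m (n + 1) with hlt | hge
      · have hmn' : m ≤ n := Nat.lt_succ_iff.1 hlt
        rw [hls] at hJ
        obtain ⟨J₁, hJ₁, hJc⟩ := mem_iUnion₂.1 hJ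
        have hJsub : J ⊆ J₁ := T.child_sub J₁ (hsub n hJ₁) J hJc
        obtain ⟨x, hxI, hxJ⟩ := hIJ
        exact hJsub.trans (ih hmn' I hI J₁ hJ₁ ⟨x, hxI, hJsub hxJ⟩)
      · have : m = n + 1 := le_antisymm hmn hge
        subst this
        exact (hsame _ I hI J hJ hIJ) ▸ Set.Subset.rfl
  refine ⟨by rw [hlm]; exact countable_iUnion hcnt, ?_, ?_⟩
  · intro I hI J hJ hIJ
    rw [hlm] at hI hJ
    obtain ⟨m, hI⟩ := mem_iUnion.1 hI
    obtain ⟨n, hJ⟩ := mem_iUnion.1 hJ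
    rcases le_total m n with h | h
    · exact Or.inr (hnest m n h I hI J hJ hIJ)
    · exact Or.inl (hnest n m h J hJ I hI ⟨hIJ.choose, hIJ.choose_spec.2, hIJ.choose_spec.1⟩)
  · intro 𝒞 h𝒞 K hK ⟨x, hxK⟩
    have hex : ∃ n, ∃ K' ∈ 𝒞 ∩ lvl n, K ⊆ K' := by
      have : K ∈ T.mem := h𝒞 hK
      rw [hlm] at this
      obtain ⟨n, hn⟩ := mem_iUnion.1 this
      exact ⟨n, K, ⟨hK, hn⟩, Set.Subset.rfl⟩
    obtain ⟨Km, ⟨hKm𝒞, hKmlvl⟩, hKKm⟩ := (Nat.find_spec hex)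
    refine ⟨Km, hKm𝒞, hKKm, ?_⟩
    intro K' hK' hKmK'
    have hK'mem : K' ∈ T.mem := h𝒞 hK'
    rw [hlm] at hK'mem
    obtain ⟨p, hp⟩ := mem_iUnion.1 hK'mem
    have hple : Nat.find hex ≤ p := by
      by_contra hlt
      push_neg at hlt
      exact Nat.find_min hex hlt ⟨K', ⟨hK', hp⟩, hKKm.trans hKmK'⟩
    exact (hnest _ _ hple Km hKmlvl K' hp ⟨x, hKKm hxK, hKmK' (hKKm hxK)⟩).antisymm hKmK' |>.symm

/-- membership in `S_φ` is characterized by strict decrease of the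
averages along ancestors. -/
theorem statement3 {X : Type*} [MeasurableSpace X] (μ : Measure X)
    [IsProbabilityMeasure μ] [NullSingletonClass μ] (T : DTree X μ)
    (φ : X → ℝ) (h0 : ∀ x, 0 ≤ φ x) (hint : Integrable φ μ) (hgood : TGood μ T φ)
    (I : Set X) (hI : I ∈ T.mem) (hne : I ≠ Set.univ) :
    I ∈ trS μ T φ ↔ ∀ J ∈ T.mem, I ⊂ J → trAvg μ φ J < trAvg μ φ I := by

  classical
  obtain ⟨hcnt, hnest, hmaxel⟩ := T.structure_facts
  have hφabs : (fun y => |φ y|) = φ := funext fun y => abs_of_nonneg (h0 y)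
  have hMax : ∀ x, trMax μ T φ x
      = sSup {r | ∃ K ∈ T.mem, x ∈ K ∧ r = trAvg μ φ K} := by
    intro x; simp only [trMax, hφabs]
  have hpos : ∀ K ∈ T.mem, 0 < (μ K).toReal := fun K hK =>
    ENNReal.toReal_pos (T.pos K hK).ne' (measure_ne_top μ K)
  have hint0 : ∀ K ∈ T.mem, 0 ≤ ∫ x in K, φ x ∂μ := fun K hK =>
    setIntegral_nonneg (T.meas K hK) fun x _ => h0 x
  have havg0 : ∀ K ∈ T.mem, 0 ≤ trAvg μ φ K := fun K hK =>
    mul_nonneg (inv_nonneg.2 ENNReal.toReal_nonneg) (hint0 K hK)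
  have hintmono : ∀ K L : Set X, K ⊆ L → ∫ x in K, φ x ∂μ ≤ ∫ x in L, φ x ∂μ :=
    fun K L hKL => setIntegral_mono_set hint.integrableOn
      (Eventually.of_forall fun x => h0 x) (HasSubset.Subset.eventuallyLE hKL)
  have hIint : ∫ x in I, φ x ∂μ = trAvg μ φ I * (μ I).toReal := by
    rw [trAvg, inv_mul_eq_div, div_mul_cancel₀ _ (hpos I hI).ne']
  constructor
  · rintro (⟨-, hApos⟩ | hIu)
    swap
    · exact absurd (mem_singleton_iff.1 hIu) hne
    intro J hJ hIJ
    obtain ⟨x, hxbad, -, hxI, hxmax, hxlarge⟩ :=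
      nonempty_of_measure_ne_zero hApos.ne'
    by_contra hcon
    push_neg at hcon
    set S : Set ℝ := {r | ∃ K ∈ T.mem, x ∈ K ∧ r = trAvg μ φ K} with hS
    have hmaxS : trMax μ T φ x = sSup S := hMax x
    have haS : trAvg μ φ I ∈ S := ⟨I, hI, hxI, rfl⟩
    have hJS : trAvg μ φ J ∈ S := ⟨J, hJ, hIJ.1 hxI, rfl⟩
    have hbdd : BddAbove S := by
      by_contra hb
      have ha0 : trAvg μ φ I = 0 := by
        rw [← hxmax, hmaxS, Real.sSup_of_not_bddAbove hb]
      have hI0 : ∫ x in I, φ x ∂μ = 0 := by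
        rw [hIint, ha0, zero_mul]
      apply hb
      refine ⟨(μ I).toReal⁻¹ * ∫ x, φ x ∂μ, ?_⟩
      rintro r ⟨K, hK, hxK, rfl⟩
      rcases hnest I hI K hK ⟨x, hxI, hxK⟩ with hIK | hKI
      · refine mul_le_mul ?_ ?_ (hint0 K hK) (inv_nonneg.2 ENNReal.toReal_nonneg)
        · exact inv_anti₀ (hpos I hI)
            (ENNReal.toReal_mono (measure_ne_top μ K) (measure_mono hIK))
        · rw [← setIntegral_univ (μ := μ) (f := φ)]
          exact hintmono K univ (subset_univ K)
      · have hK0 : ∫ x in K, φ x ∂μ = 0 :=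
          le_antisymm ((hintmono K I hKI).trans hI0.le) (hint0 K hK)
        rw [trAvg, hK0, mul_zero]
        exact mul_nonneg (inv_nonneg.2 ENNReal.toReal_nonneg) (integral_nonneg h0)
    have hle : trAvg μ φ J ≤ trAvg μ φ I := by
      rw [← hxmax, hmaxS]; exact le_csSup hbdd hJS
    have heq : trMax μ T φ x = trAvg μ φ J := by
      rw [hxmax]; exact (le_antisymm hle hcon).symm
    exact hIJ.2 (hxlarge J hJ (hIJ.1 hxI) heq)
  · intro hyp
    have haU : trAvg μ φ univ < trAvg μ φ I :=
      hyp univ T.top_mem (ssubset_univ_iff.2 hne)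
    have hapos : 0 < trAvg μ φ I := lt_of_le_of_lt (havg0 univ T.top_mem) haU
    set F : Set (Set X) := {K | K ∈ T.mem ∧ K ⊆ I ∧ trAvg μ φ I < trAvg μ φ K} with hF
    set U : Set X := ⋃₀ F with hU
    have hUI : U ⊆ I := by
      rintro x ⟨K, hK, hxK⟩
      exact hK.2.1 hxK
    -- the union of F equals the union of the maximal elements of F
    set Fmax : Set (Set X) := {K | K ∈ F ∧ ∀ K' ∈ F, K ⊆ K' → K = K'} with hFmax
    have hFmaxF : Fmax ⊆ F := fun K hK => hK.1
    have hFmem : F ⊆ T.mem := fun K hK => hK.1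
    have hUeq : U = ⋃₀ Fmax := by
      apply Set.Subset.antisymm
      · rintro x ⟨K, hK, hxK⟩
        obtain ⟨Km, hKm, hKKm, hKmmax⟩ :=
          hmaxel F hFmem K hK (nonempty_of_measure_ne_zero (T.pos K (hFmem hK)).ne')
        exact ⟨Km, ⟨hKm, hKmmax⟩, hKKm hxK⟩
      · exact sUnion_subset_sUnion hFmaxF
    have hFmaxCnt : Fmax.Countable := hcnt.mono (hFmaxF.trans hFmem)
    have hFmaxDisj : Fmax.Pairwise Disjoint := by
      intro K1 hK1 K2 hK2 hne12
      rw [Set.disjoint_iff_inter_eq_empty]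
      by_contra hne'
      rcases hnest K1 (hFmem (hFmaxF hK1)) K2 (hFmem (hFmaxF hK2))
        (Set.nonempty_iff_ne_empty.2 hne') with h | h
      · exact hne12 (hK1.2 K2 (hFmaxF hK2) h)
      · exact hne12 ((hK2.2 K1 (hFmaxF hK1) h).symm)
    have hGpos : 0 < μ (I \ U) := by
      by_contra hG
      push_neg at hG
      have hG0 : μ (I \ U) = 0 := le_antisymm hG zero_le
      have hμIU : μ U = μ I := by
        refine le_antisymm (measure_mono hUI) ?_
        calc μ I ≤ μ (I \ U ∪ U) := measure_mono (subset_diff_union I U)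
          _ ≤ μ (I \ U) + μ U := measure_union_le _ _
          _ = μ U := by rw [hG0, zero_add]
      -- Fmax nonempty, otherwise U empty
      have hFne : Fmax.Nonempty := by
        by_contra hFe
        rw [Set.not_nonempty_iff_eq_empty] at hFe
        have : U = ∅ := by rw [hUeq, hFe, sUnion_empty]
        rw [this] at hμIU
        exact (T.pos I hI).ne' (by simpa using hμIU.symm)
      have : Countable ↥Fmax := hFmaxCnt.to_subtype
      have hdisj' : Pairwise (Function.onFun Disjoint fun K : ↥Fmax => (K : Set X)) := by
        rintro ⟨K1, hK1⟩ ⟨K2, hK2⟩ hne12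
        exact hFmaxDisj hK1 hK2 (by simpa [Subtype.ext_iff] using hne12)
      have hmeas' : ∀ K : ↥Fmax, MeasurableSet (K : Set X) :=
        fun K => T.meas K (hFmem (hFmaxF K.2))
      have hUiU : U = ⋃ K : ↥Fmax, (K : Set X) := by
        rw [hUeq, sUnion_eq_iUnion]
      have hμsum : μ U = ∑' K : ↥Fmax, μ (K : Set X) := by
        rw [hUiU]; exact measure_iUnion hdisj' hmeas'
      have hsumint : HasSum (fun K : ↥Fmax => ∫ x in (K : Set X), φ x ∂μ)
          (∫ x in U, φ x ∂μ) := by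
        rw [hUiU]
        exact hasSum_integral_iUnion hmeas' hdisj' hint.integrableOn
      have hsummeas : Summable fun K : ↥Fmax => (μ (K : Set X)).toReal := by
        apply ENNReal.summable_toReal
        rw [← hμsum]
        exact measure_ne_top μ U
      have htsmeas : (μ U).toReal = ∑' K : ↥Fmax, (μ (K : Set X)).toReal := by
        rw [hμsum]
        exact ENNReal.tsum_toReal_eq fun K => measure_ne_top μ _
      have hterm : ∀ K : ↥Fmax,
          trAvg μ φ I * (μ (K : Set X)).toReal < ∫ x in (K : Set X), φ x ∂μ := by
        intro K
        have hKF : (K : Set X) ∈ F := hFmaxF K.2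
        have hKmem : (K : Set X) ∈ T.mem := hFmem hKF
        have h2 : trAvg μ φ (K : Set X) * (μ (K : Set X)).toReal
            = ∫ x in (K : Set X), φ x ∂μ := by
          rw [trAvg, inv_mul_eq_div, div_mul_cancel₀ _ (hpos _ hKmem).ne']
        exact (mul_lt_mul_of_pos_right hKF.2.2 (hpos _ hKmem)).trans_eq h2
      obtain ⟨K0, hK0⟩ := hFne
      have hstrict : trAvg μ φ I * (μ U).toReal < ∫ x in U, φ x ∂μ := by
        rw [htsmeas, ← tsum_mul_left]
        rw [← hsumint.tsum_eq]
        exact Summable.tsum_lt_tsum (fun K => (hterm K).le) (hterm ⟨K0, hK0⟩)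
          (hsummeas.mul_left _) hsumint.summable
      rw [hμIU] at hstrict
      have : ∫ x in U, φ x ∂μ ≤ ∫ x in I, φ x ∂μ := hintmono U I hUI
      rw [hIint] at this
      exact absurd (hstrict.trans_le this) (lt_irrefl _)
    refine Or.inl ⟨hI, lt_of_lt_of_le hGpos (measure_mono ?_)⟩
    intro x hx
    obtain ⟨hxI, hxU⟩ := hx
    have hub : ∀ K ∈ T.mem, x ∈ K → trAvg μ φ K ≤ trAvg μ φ I := by
      intro K hK hxK
      rcases hnest I hI K hK ⟨x, hxI, hxK⟩ with hIK | hKI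
      · rcases eq_or_ne I K with h | h
        · rw [h]
        · exact (hyp K hK (hIK.ssubset_of_ne h)).le
      · by_contra hlt
        push_neg at hlt
        exact hxU ⟨K, ⟨hK, hKI, hlt⟩, hxK⟩
    have hbdd : BddAbove {r | ∃ K ∈ T.mem, x ∈ K ∧ r = trAvg μ φ K} := by
      refine ⟨trAvg μ φ I, ?_⟩
      rintro r ⟨K, hK, hxK, rfl⟩
      exact hub K hK hxK
    have hmaxx : trMax μ T φ x = trAvg μ φ I := by
      rw [hMax]
      refine le_antisymm (csSup_le ⟨_, I, hI, hxI, rfl⟩ ?_) (le_csSup hbdd ⟨I, hI, hxI, rfl⟩)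
      rintro r ⟨K, hK, hxK, rfl⟩
      exact hub K hK hxK
    have hxbad : x ∉ trBad μ T φ := by
      intro hb
      have := hb I hI hxI
      rw [hmaxx] at this
      exact lt_irrefl _ this
    refine ⟨hxbad, hI, hxI, hmaxx, ?_⟩
    intro J hJ hxJ hJeq
    rcases hnest I hI J hJ ⟨x, hxI, hxJ⟩ with hIJ | hJI
    · rcases eq_or_ne I J with h | h
      · rw [← h]
      · exfalso
        have := hyp J hJ (hIJ.ssubset_of_ne h)
        rw [← hJeq, hmaxx] at this
        exact lt_irrefl _ this
    · exact hJI


end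
end

section
/- Let (X,μ) be a nonatomic probability space, T a tree on X, and φ a T-good function. If I, J ∈ S_φ, then either A(φ,J) ∩ I = ∅ or J ⊆ I. -/
open MeasureTheory Filter Set

noncomputable section

variable {X : Type*} [MeasurableSpace X]

/-- Any two tree elements with a common point are nested. -/
lemma DTree.nested {μ : Measure X} (T : DTree X μ) {I J : Set X}
    (hI : I ∈ T.mem) (hJ : J ∈ T.mem) {x : X} (hxI : x ∈ I) (hxJ : x ∈ J) :
    I ⊆ J ∨ J ⊆ I := by
  obtain ⟨lvl, hl0, hsucc, hmem, -⟩ := T.generated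
  have hlm : ∀ m, ∀ K ∈ lvl m, K ∈ T.mem := by
    intro m K hK
    rw [hmem]
    exact Set.mem_iUnion.mpr ⟨m, hK⟩
  have hdisj : ∀ m, (lvl m).Pairwise Disjoint := by
    intro m
    induction m with
    | zero => rw [hl0]; exact Set.pairwise_singleton _ _
    | succ m ih =>
      intro A hA B hB hne
      rw [hsucc] at hA hB
      simp only [Set.mem_iUnion] at hA hB
      obtain ⟨P, hP, hAP⟩ := hA
      obtain ⟨Q, hQ, hBQ⟩ := hB
      by_cases hPQ : P = Q
      · subst hPQ
        exact T.child_disj P (hlm m P hP) hAP hBQ hne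
      · exact (ih hP hQ hPQ).mono (T.child_sub P (hlm m P hP) A hAP)
          (T.child_sub Q (hlm m Q hQ) B hBQ)
  have hanc : ∀ k m, ∀ K ∈ lvl (m + k), ∃ P ∈ lvl m, K ⊆ P := by
    intro k
    induction k with
    | zero => intro m K hK; exact ⟨K, hK, subset_rfl⟩
    | succ k ih =>
      intro m K hK
      rw [show m + (k + 1) = (m + k) + 1 from rfl, hsucc] at hK
      simp only [Set.mem_iUnion] at hK
      obtain ⟨P, hP, hKP⟩ := hK
      obtain ⟨Q, hQ, hPQ⟩ := ih m P hP
      exact ⟨Q, hQ, (T.child_sub P (hlm _ _ hP) K hKP).trans hPQ⟩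
  have key : ∀ m n : ℕ, ∀ A B : Set X, m ≤ n → A ∈ lvl m → B ∈ lvl n →
      x ∈ A → x ∈ B → B ⊆ A := by
    intro m n A B hmn hA hB hxA hxB
    obtain ⟨k, rfl⟩ := Nat.exists_eq_add_of_le hmn
    obtain ⟨P, hP, hBP⟩ := hanc k m B hB
    by_cases hAP : A = P
    · subst hAP; exact hBP
    · exact absurd hxA (Set.disjoint_right.mp (hdisj m hA hP hAP) (hBP hxB))
  rw [hmem] at hI hJ
  obtain ⟨m, hIm⟩ := Set.mem_iUnion.mp hI
  obtain ⟨n, hJn⟩ := Set.mem_iUnion.mp hJ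
  rcases le_total m n with h | h
  · exact Or.inr (key m n I J h hIm hJn hxI hxJ)
  · exact Or.inl (key n m J I h hJn hIm hxJ hxI)

set_option maxHeartbeats 1000000 in
/-- If `trMax φ y = trAvg φ I` with `y ∈ I ∈ T`, then for every tree element
`K` containing `y`, `trAvg φ K ≤ trMax φ y`. -/
lemma avg_le_trMax {μ : Measure X} [IsProbabilityMeasure μ] (T : DTree X μ)
    {φ : X → ℝ} (h0 : ∀ x, 0 ≤ φ x) (hint : Integrable φ μ)
    {y : X} {I : Set X} (hI : I ∈ T.mem) (hyI : y ∈ I)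
    (hmax : trMax μ T φ y = trAvg μ φ I)
    {K : Set X} (hK : K ∈ T.mem) (hyK : y ∈ K) :
    trAvg μ φ K ≤ trMax μ T φ y := by
  have habs : (fun z => |φ z|) = φ := funext fun z => abs_of_nonneg (h0 z)
  set S : Set ℝ := {r : ℝ | ∃ L ∈ T.mem, y ∈ L ∧ r = trAvg μ (fun z => |φ z|) L}
    with hS
  have hmemS : trAvg μ φ K ∈ S := ⟨K, hK, hyK, by rw [habs]⟩
  have htm : trMax μ T φ y = sSup S := rfl
  have hItr : 0 < (μ I).toReal :=
    ENNReal.toReal_pos (T.pos I hI).ne' (measure_ne_top μ I)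
  by_cases hb : BddAbove S
  · rw [htm]; exact le_csSup hb hmemS
  · exfalso
    apply hb
    have h00 : trMax μ T φ y = 0 := by
      rw [htm, Real.sSup_of_not_bddAbove hb]
    have hAvgI0 : trAvg μ φ I = 0 := by rw [← hmax, h00]
    have hIint0 : ∫ z in I, φ z ∂μ = 0 := by
      have := hAvgI0
      rw [trAvg] at this
      rcases mul_eq_zero.mp this with h | h
      · exact absurd h (by positivity)
      · exact h
    refine ⟨max 0 ((μ I).toReal⁻¹ * ∫ z, φ z ∂μ), ?_⟩
    rintro r ⟨L, hL, hyL, rfl⟩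
    rw [habs]
    have hnn : 0 ≤ᵐ[μ] φ := Filter.Eventually.of_forall h0
    rcases T.nested hI hL hyI hyL with hIL | hLI
    · -- I ⊆ L : the average over L is at most (μ I)⁻¹ ∫ φ
      refine le_max_of_le_right ?_
      rw [trAvg]
      have h1 : ∫ z in L, φ z ∂μ ≤ ∫ z, φ z ∂μ := by
        have h1' : ∫ z in L, φ z ∂μ ≤ ∫ z in Set.univ, φ z ∂μ :=
          setIntegral_mono_set hint.integrableOn
            (ae_restrict_of_ae hnn) (HasSubset.Subset.eventuallyLE (Set.subset_univ L))
        rwa [setIntegral_univ] at h1'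
      have h2 : (μ L).toReal⁻¹ ≤ (μ I).toReal⁻¹ := by
        apply inv_anti₀ hItr
        exact ENNReal.toReal_le_toReal (measure_ne_top μ I) (measure_ne_top μ L)
          |>.mpr (measure_mono hIL)
      have h3 : 0 ≤ ∫ z in L, φ z ∂μ :=
        setIntegral_nonneg (T.meas L hL) fun z _ => h0 z
      exact mul_le_mul h2 h1 h3 (le_of_lt (by positivity))
    · -- L ⊆ I : the average over L is ≤ 0
      refine le_max_of_le_left ?_
      rw [trAvg]
      have h1 : ∫ z in L, φ z ∂μ ≤ 0 := by
        rw [← hIint0]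
        exact setIntegral_mono_set hint.integrableOn
          (ae_restrict_of_ae hnn) (HasSubset.Subset.eventuallyLE hLI)
      exact mul_nonpos_of_nonneg_of_nonpos (inv_nonneg.mpr ENNReal.toReal_nonneg) h1

/-- if `I, J ∈ S_φ` then either `A(φ,J) ∩ I = ∅` or `J ⊆ I`. -/
theorem statement4 {X : Type*} [MeasurableSpace X] (μ : Measure X)
    [IsProbabilityMeasure μ] [NullSingletonClass μ] (T : DTree X μ)
    (φ : X → ℝ) (h0 : ∀ x, 0 ≤ φ x) (hint : Integrable φ μ) (hgood : TGood μ T φ)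
    (I J : Set X) (hI : I ∈ trS μ T φ) (hJ : J ∈ trS μ T φ) :
    trA μ T φ J ∩ I = ∅ ∨ J ⊆ I := by
  by_cases hne : trA μ T φ J ∩ I = ∅
  · exact Or.inl hne
  right
  obtain ⟨x, hxJ, hxI⟩ := Set.nonempty_iff_ne_empty.mpr hne
  obtain ⟨-, hJmem, hxJ', hmaxJ, hmaxlJ⟩ := hxJ
  rcases hI with ⟨hImem, hIApos⟩ | hIuniv
  · -- I is a genuine element of the tree with μ(A(φ,I)) > 0
    obtain ⟨y, hyA⟩ := nonempty_of_measure_ne_zero hIApos.ne'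
    obtain ⟨-, -, hyI, hmaxI, hmaxlI⟩ := hyA
    -- I and J are nested, via x ∈ I ∩ J
    rcases T.nested hImem hJmem hxI hxJ' with hIJ | hJI
    · -- I ⊆ J : show the averages are equal and use the maximality of I at y
      have h1 : trAvg μ φ I ≤ trAvg μ φ J := by
        rw [← hmaxJ]
        exact avg_le_trMax T h0 hint hJmem hxJ' hmaxJ hImem hxI
      have h2 : trAvg μ φ J ≤ trAvg μ φ I := by
        rw [← hmaxI]
        exact avg_le_trMax T h0 hint hImem hyI hmaxI hJmem (hIJ hyI)
      exact hmaxlI J hJmem (hIJ hyI) (by rw [hmaxI, le_antisymm h2 h1])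
    · exact hJI
  · rw [Set.mem_singleton_iff] at hIuniv
    rw [hIuniv]
    exact Set.subset_univ J

end
end

section
/- Let (X,μ) be a nonatomic probability space, T a tree on X, and φ a T-good function. If I ∈ S_φ, then there exists J ∈ C(I) such that J ∉ S_φ. -/
open MeasureTheory Filter Set

noncomputable section

variable {X : Type*} [MeasurableSpace X]

section Aux

variable {μ : Measure X}

/-- Any two elements of the tree are nested or disjoint. -/
lemma DTree.nested_or_disjoint (T : DTree X μ) {K J : Set X}
    (hK : K ∈ T.mem) (hJ : J ∈ T.mem) : K ⊆ J ∨ J ⊆ K ∨ Disjoint K J := by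
  obtain ⟨lvl, hl0, hls, hlm, -⟩ := T.generated
  have hsub : ∀ m, lvl m ⊆ T.mem := fun m I hI => hlm ▸ Set.mem_iUnion.2 ⟨m, hI⟩
  have anc : ∀ m k, ∀ J ∈ lvl (m + k), ∃ I ∈ lvl m, J ⊆ I := by
    intro m k
    induction k with
    | zero => exact fun J hJ => ⟨J, hJ, subset_rfl⟩
    | succ k ih =>
      intro J hJ
      rw [Nat.add_succ, hls] at hJ
      simp only [Set.mem_iUnion] at hJ
      obtain ⟨P, hP, hJP⟩ := hJ
      obtain ⟨I, hI, hPI⟩ := ih P hP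
      exact ⟨I, hI, (T.child_sub P (hsub _ hP) J hJP).trans hPI⟩
  have pd : ∀ m, (lvl m).Pairwise Disjoint := by
    intro m
    induction m with
    | zero => rw [hl0]; exact Set.pairwise_singleton _ _
    | succ m ih =>
      intro J1 h1 J2 h2 hne
      rw [hls] at h1 h2
      simp only [Set.mem_iUnion] at h1 h2
      obtain ⟨I1, hI1, hJ1⟩ := h1
      obtain ⟨I2, hI2, hJ2⟩ := h2
      by_cases hI : I1 = I2
      · exact T.child_disj I1 (hsub _ hI1) hJ1 (hI ▸ hJ2) hne
      · exact (ih hI1 hI2 hI).mono (T.child_sub I1 (hsub _ hI1) J1 hJ1)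
          (T.child_sub I2 (hsub _ hI2) J2 hJ2)
  have key : ∀ a b, a ≤ b → ∀ K J : Set X, K ∈ lvl a → J ∈ lvl b →
      J ⊆ K ∨ Disjoint J K := by
    intro a b hab K J hKa hJb
    obtain ⟨k, rfl⟩ := Nat.exists_eq_add_of_le hab
    obtain ⟨I0, hI0, hJI0⟩ := anc a k J hJb
    by_cases h : I0 = K
    · exact Or.inl (h ▸ hJI0)
    · exact Or.inr ((pd a hI0 hKa h).mono_left hJI0)
  rw [hlm] at hK hJ
  simp only [Set.mem_iUnion] at hK hJ
  obtain ⟨a, hKa⟩ := hK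
  obtain ⟨b, hJb⟩ := hJ
  rcases le_total a b with hab | hba
  · rcases key a b hab K J hKa hJb with h | h
    · exact Or.inr (Or.inl h)
    · exact Or.inr (Or.inr h.symm)
  · rcases key b a hba J K hJb hKa with h | h
    · exact Or.inl h
    · exact Or.inr (Or.inr h)

/-- A child of an element of the tree is a proper subset of it. -/
lemma DTree.child_ne (T : DTree X μ) {I J : Set X} (hI : I ∈ T.mem)
    (hJ : J ∈ T.child I) : J ≠ I := by
  intro h
  subst h
  obtain ⟨A, hA, B, hB, hAB⟩ := T.child_two J hI
  have key : ∀ K ∈ T.child J, K ≠ J → False := by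
    intro K hK hKne
    have hd : Disjoint K J := T.child_disj J hI hK hJ hKne
    have hKe : K = ∅ := hd.eq_bot_of_le (T.child_sub J hI K hK)
    have := T.pos K (T.child_sub_mem J hI hK)
    simp [hKe] at this
  by_cases hAJ : A = J
  · exact key B hB fun h => hAB (hAJ.trans h.symm)
  · exact key A hA hAJ

lemma avg_lt_of_trA (μ : Measure X) [IsProbabilityMeasure μ] (T : DTree X μ)
    (φ : X → ℝ) (h0 : ∀ x, 0 ≤ φ x) (hint : Integrable φ μ)
    {I J : Set X} (hI : I ∈ T.mem) (hJc : J ∈ T.child I)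
    {x : X} (hx : x ∈ trA μ T φ J) : trAvg μ φ I < trAvg μ φ J := by
  have hphiabs : (fun y => |φ y|) = φ := funext fun y => abs_of_nonneg (h0 y)
  obtain ⟨-, hJmem, hxJ, hmax, hbig⟩ := hx
  have hJI : J ⊆ I := T.child_sub I hI J hJc
  have hJne : J ≠ I := T.child_ne hI hJc
  have hxI : x ∈ I := hJI hxJ
  have hSdef : trMax μ T φ x = sSup {r | ∃ K ∈ T.mem, x ∈ K ∧ r = trAvg μ φ K} := by
    simp only [trMax, hphiabs]
  have hIS : trAvg μ φ I ∈ {r | ∃ K ∈ T.mem, x ∈ K ∧ r = trAvg μ φ K} :=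
    ⟨I, hI, hxI, rfl⟩
  have hμJpos : 0 < (μ J).toReal :=
    ENNReal.toReal_pos (T.pos J hJmem).ne' (measure_ne_top μ J)
  have hnonneg : ∀ K : Set X, K ∈ T.mem → 0 ≤ ∫ y in K, φ y ∂μ :=
    fun K hK => setIntegral_nonneg (T.meas K hK) fun y _ => h0 y
  -- the set defining the maximal function at `x` is bounded above
  have hb : BddAbove {r | ∃ K ∈ T.mem, x ∈ K ∧ r = trAvg μ φ K} := by
    by_contra hb
    have hsup0 : trMax μ T φ x = 0 := by
      rw [hSdef]; exact Real.sSup_of_not_bddAbove hb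
    have hAvJ0 : trAvg μ φ J = 0 := hmax ▸ hsup0
    have hintJ0 : ∫ y in J, φ y ∂μ = 0 := by
      have := hAvJ0
      rw [trAvg] at this
      rcases mul_eq_zero.1 this with h | h
      · exact absurd h (by positivity)
      · exact h
    apply hb
    refine ⟨(μ J).toReal⁻¹ * ∫ y, φ y ∂μ, ?_⟩
    rintro r ⟨K, hKmem, hxK, rfl⟩
    have hKJ : K ⊆ J ∨ J ⊆ K := by
      rcases T.nested_or_disjoint hKmem hJmem with h | h | h
      · exact Or.inl h
      · exact Or.inr h
      · exact absurd hxJ (Set.disjoint_left.1 h hxK)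
    rcases hKJ with h | h
    · have h1 : ∫ y in K, φ y ∂μ ≤ ∫ y in J, φ y ∂μ :=
        setIntegral_mono_set hint.integrableOn
          (ae_restrict_of_ae (Filter.Eventually.of_forall h0)) h.eventuallyLE
      have h2 : trAvg μ φ K = 0 := by
        rw [trAvg, le_antisymm (h1.trans_eq hintJ0) (hnonneg K hKmem), mul_zero]
      rw [h2]
      exact mul_nonneg (by positivity) (integral_nonneg h0)
    · rw [trAvg]
      have h1 : (μ K).toReal⁻¹ ≤ (μ J).toReal⁻¹ := by
        apply inv_anti₀ hμJpos
        exact ENNReal.toReal_le_toReal (measure_ne_top μ J) (measure_ne_top μ K)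
          |>.2 (measure_mono h)
      have h2 : ∫ y in K, φ y ∂μ ≤ ∫ y, φ y ∂μ :=
        setIntegral_le_integral hint (Filter.Eventually.of_forall h0)
      exact mul_le_mul h1 h2 (hnonneg K hKmem) (by positivity)
  have hle : trAvg μ φ I ≤ trMax μ T φ x := by
    rw [hSdef]; exact le_csSup hb hIS
  have hne : trAvg μ φ I ≠ trAvg μ φ J := by
    intro h
    exact hJne (Set.Subset.antisymm hJI (hbig I hI hxI (hmax.trans h.symm)))
  exact lt_of_le_of_ne (hmax ▸ hle) hne

end Aux

/-- every `I ∈ S_φ` has a child not in `S_φ`. -/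
theorem statement5 {X : Type*} [MeasurableSpace X] (μ : Measure X)
    [IsProbabilityMeasure μ] [NullSingletonClass μ] (T : DTree X μ)
    (φ : X → ℝ) (h0 : ∀ x, 0 ≤ φ x) (hint : Integrable φ μ) (hgood : TGood μ T φ)
    (I : Set X) (hI : I ∈ trS μ T φ) :
    ∃ J ∈ T.child I, J ∉ trS μ T φ := by
  have hImem : I ∈ T.mem := by
    rcases hI with h | h
    · exact h.1
    · exact (Set.mem_singleton_iff.1 h) ▸ T.top_mem
  by_contra hcon
  push_neg at hcon
  -- every child has a strictly larger average
  have hchild : ∀ J ∈ T.child I, trAvg μ φ I < trAvg μ φ J := by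
    intro J hJ
    rcases hcon J hJ with h | h
    · obtain ⟨x, hx⟩ := MeasureTheory.nonempty_of_measure_ne_zero h.2.ne'
      exact avg_lt_of_trA μ T φ h0 hint hImem hJ hx
    · exfalso
      have hJu : J = Set.univ := Set.mem_singleton_iff.1 h
      have hJI : J ⊆ I := T.child_sub I hImem J hJ
      have hIu : I = Set.univ := Set.eq_univ_of_univ_subset (hJu ▸ hJI)
      exact T.child_ne hImem hJ (hJu.trans hIu.symm)
  haveI : Countable ↥(T.child I) := (T.child_countable I hImem).to_subtype
  set s : ↥(T.child I) → Set X := fun J => (J : Set X) with hs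
  have hmeasJ : ∀ J : ↥(T.child I), MeasurableSet (s J) :=
    fun J => T.meas J (T.child_sub_mem I hImem J.2)
  have hdisj : Pairwise (Function.onFun Disjoint s) := fun J K hne =>
    T.child_disj I hImem J.2 K.2 fun h => hne (Subtype.ext h)
  have hUnion : ⋃ J, s J = I := by
    rw [← Set.sUnion_eq_iUnion]
    exact T.child_union I hImem
  have hsum : HasSum (fun J => ∫ x in s J, φ x ∂μ) (∫ x in I, φ x ∂μ) := by
    have h := MeasureTheory.hasSum_integral_iUnion hmeasJ hdisj
      (by rw [hUnion]; exact hint.integrableOn)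
    rwa [hUnion] at h
  have hμsummable : Summable fun J => (μ (s J)).toReal := by
    apply ENNReal.summable_toReal
    rw [← measure_iUnion hdisj hmeasJ]
    exact measure_ne_top μ _
  have hμsum : (∑' J, (μ (s J)).toReal) = (μ I).toReal := by
    rw [← ENNReal.tsum_toReal_eq fun J => measure_ne_top μ _,
      ← measure_iUnion hdisj hmeasJ, hUnion]
  have hμpos : ∀ J : ↥(T.child I), 0 < (μ (s J)).toReal :=
    fun J => ENNReal.toReal_pos (T.pos _ (T.child_sub_mem I hImem J.2)).ne'
      (measure_ne_top μ _)
  have hint_eq : ∀ K : Set X, K ∈ T.mem →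
      ∫ x in K, φ x ∂μ = (μ K).toReal * trAvg μ φ K := by
    intro K hK
    rw [trAvg, ← mul_assoc, mul_inv_cancel₀
      (ENNReal.toReal_pos (T.pos K hK).ne' (measure_ne_top μ K)).ne', one_mul]
  have hstrict : ∀ J : ↥(T.child I),
      (μ (s J)).toReal * trAvg μ φ I < ∫ x in s J, φ x ∂μ := by
    intro J
    rw [hint_eq (s J) (T.child_sub_mem I hImem J.2)]
    exact mul_lt_mul_of_pos_left (hchild J J.2) (hμpos J)
  -- pick a child to witness strictness
  obtain ⟨J0, hJ0, -⟩ := T.child_two I hImem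
  have hlt : (∑' J : ↥(T.child I), (μ (s J)).toReal * trAvg μ φ I)
      < ∑' J : ↥(T.child I), ∫ x in s J, φ x ∂μ :=
    Summable.tsum_lt_tsum (i := (⟨J0, hJ0⟩ : ↥(T.child I))) (fun J => (hstrict J).le)
      (hstrict _) (hμsummable.mul_right _) hsum.summable
  rw [tsum_mul_right, hμsum, hsum.tsum_eq, hint_eq I hImem] at hlt
  exact lt_irrefl _ hlt

end
end

section
/- Let (X,μ) be a nonatomic probability space, T a tree on X, and φ a T-good function. Then for every I ∈ S_φ, A(φ,I) = I \ ∪{ J : J ∈ S_φ, J* = I }, and consequently μ(A(φ,I)) = μ(I) − Σ_{J ∈ S_φ, J* = I} μ(J). -/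
open MeasureTheory Filter Set

noncomputable section

variable {X : Type*} [MeasurableSpace X]

noncomputable section

namespace S7Aux

variable {X : Type*} [MeasurableSpace X]

section Tree

variable {μ : Measure X} [IsProbabilityMeasure μ] {T : DTree X μ}
  {lvl : ℕ → Set (Set X)}

theorem lvl_sub (hlU : T.mem = ⋃ m, lvl m) {m : ℕ} : lvl m ⊆ T.mem := by
  rw [hlU]; exact subset_iUnion lvl m

theorem mem_nonempty {I : Set X} (hI : I ∈ T.mem) : I.Nonempty :=
  nonempty_of_measure_ne_zero (T.pos I hI).ne'

theorem lvl_pairwise (hlU : T.mem = ⋃ m, lvl m) (hl0 : lvl 0 = {Set.univ})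
    (hlS : ∀ m, lvl (m + 1) = ⋃ I ∈ lvl m, T.child I) :
    ∀ m, (lvl m).Pairwise Disjoint := by
  intro m
  induction m with
  | zero => rw [hl0]; exact Set.pairwise_singleton _ _
  | succ m ih =>
    rw [hlS m]
    intro J hJ K hK hne
    simp only [mem_iUnion, exists_prop] at hJ hK
    obtain ⟨I1, hI1, hJ1⟩ := hJ
    obtain ⟨I2, hI2, hK2⟩ := hK
    by_cases hI : I1 = I2
    · subst hI; exact T.child_disj I1 (lvl_sub hlU hI1) hJ1 hK2 hne
    · exact (ih hI1 hI2 hI).mono (T.child_sub I1 (lvl_sub hlU hI1) J hJ1)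
        (T.child_sub I2 (lvl_sub hlU hI2) K hK2)

theorem lvl_up (hlU : T.mem = ⋃ m, lvl m)
    (hlS : ∀ m, lvl (m + 1) = ⋃ I ∈ lvl m, T.child I) :
    ∀ n m, m ≤ n → ∀ J ∈ lvl n, ∃ K ∈ lvl m, J ⊆ K := by
  intro n
  induction n with
  | zero =>
    intro m hm J hJ
    obtain rfl := Nat.le_zero.mp hm
    exact ⟨J, hJ, subset_rfl⟩
  | succ n ih =>
    intro m hm J hJ
    rcases Nat.lt_or_ge m (n + 1) with h | h
    · rw [hlS n] at hJ
      simp only [mem_iUnion, exists_prop] at hJ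
      obtain ⟨I, hI, hJI⟩ := hJ
      obtain ⟨K, hK, hIK⟩ := ih m (Nat.lt_succ_iff.mp h) I hI
      exact ⟨K, hK, (T.child_sub I (lvl_sub hlU hI) J hJI).trans hIK⟩
    · obtain rfl := le_antisymm hm h
      exact ⟨J, hJ, subset_rfl⟩

theorem tree_chain (hlU : T.mem = ⋃ m, lvl m) (hl0 : lvl 0 = {Set.univ})
    (hlS : ∀ m, lvl (m + 1) = ⋃ I ∈ lvl m, T.child I)
    {I J : Set X} (hI : I ∈ T.mem) (hJ : J ∈ T.mem)
    (hne : (I ∩ J).Nonempty) : I ⊆ J ∨ J ⊆ I := by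
  rw [hlU] at hI hJ
  simp only [mem_iUnion] at hI hJ
  obtain ⟨n, hIn⟩ := hI
  obtain ⟨m, hJm⟩ := hJ
  obtain ⟨x, hxI, hxJ⟩ := hne
  rcases le_total n m with h | h
  · right
    obtain ⟨K, hK, hJK⟩ := lvl_up hlU hlS m n h J hJm
    have hKI : K = I := by
      by_contra hne'
      exact Set.disjoint_left.mp (lvl_pairwise hlU hl0 hlS n hK hIn hne')
        (hJK hxJ) hxI
    exact hKI ▸ hJK
  · left
    obtain ⟨K, hK, hIK⟩ := lvl_up hlU hlS n m h I hIn
    have hKJ : K = J := by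
      by_contra hne'
      exact Set.disjoint_left.mp (lvl_pairwise hlU hl0 hlS m hK hJm hne')
        (hIK hxI) hxJ
    exact hKJ ▸ hIK

theorem lvl_ssubset_lt (hlU : T.mem = ⋃ m, lvl m) (hl0 : lvl 0 = {Set.univ})
    (hlS : ∀ m, lvl (m + 1) = ⋃ I ∈ lvl m, T.child I)
    {J K : Set X} {n m : ℕ} (hJ : J ∈ lvl n) (hK : K ∈ lvl m) (hss : J ⊂ K) :
    m < n := by
  by_contra h
  push_neg at h
  obtain ⟨K', hK', hKK'⟩ := lvl_up hlU hlS m n h K hK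
  have hJK' : J ⊆ K' := hss.subset.trans hKK'
  have hEq : J = K' := by
    by_contra hne
    obtain ⟨x, hx⟩ := mem_nonempty (lvl_sub hlU hJ)
    exact Set.disjoint_left.mp (lvl_pairwise hlU hl0 hlS n hJ hK' hne) hx (hJK' hx)
  exact hss.not_subset (hKK'.trans hEq.symm.subset)

theorem exists_maximal (hlU : T.mem = ⋃ m, lvl m) (hl0 : lvl 0 = {Set.univ})
    (hlS : ∀ m, lvl (m + 1) = ⋃ I ∈ lvl m, T.child I)
    (p : Set X → Prop) {x : X}
    (h : ∃ J, J ∈ T.mem ∧ x ∈ J ∧ p J) :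
    ∃ J, J ∈ T.mem ∧ x ∈ J ∧ p J ∧ ∀ K ∈ T.mem, x ∈ K → p K → ¬J ⊂ K := by
  classical
  obtain ⟨J0, hJ0, hxJ0, hpJ0⟩ := h
  have hJ0n : ∃ n, J0 ∈ lvl n := by rw [hlU] at hJ0; simpa using hJ0
  set S : Set ℕ := {n | ∃ J ∈ lvl n, x ∈ J ∧ p J} with hSdef
  have hSne : S.Nonempty := ⟨hJ0n.choose, J0, hJ0n.choose_spec, hxJ0, hpJ0⟩
  obtain ⟨J, hJl, hxJ, hpJ⟩ := Nat.sInf_mem hSne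
  refine ⟨J, lvl_sub hlU hJl, hxJ, hpJ, ?_⟩
  intro K hK hxK hpK hss
  obtain ⟨m, hKm⟩ : ∃ m, K ∈ lvl m := by rw [hlU] at hK; simpa using hK
  have hlt := lvl_ssubset_lt hlU hl0 hlS hJl hKm hss
  have hle : sInf S ≤ m := Nat.sInf_le ⟨K, hKm, hxK, hpK⟩
  omega

theorem mem_countable (hlU : T.mem = ⋃ m, lvl m) (hl0 : lvl 0 = {Set.univ})
    (hlS : ∀ m, lvl (m + 1) = ⋃ I ∈ lvl m, T.child I) :
    T.mem.Countable := by
  rw [hlU]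
  refine countable_iUnion ?_
  intro m
  induction m with
  | zero => rw [hl0]; exact countable_singleton _
  | succ m ih =>
    rw [hlS m]
    exact ih.biUnion fun I hI => T.child_countable I (lvl_sub hlU hI)

end Tree

end S7Aux
namespace S7Aux

set_option linter.unusedSectionVars false

variable {X : Type*} [MeasurableSpace X]
variable {μ : Measure X} [IsProbabilityMeasure μ] {T : DTree X μ} {φ : X → ℝ}
  {lvl : ℕ → Set (Set X)}

theorem muReal_pos {I : Set X} (hI : I ∈ T.mem) : 0 < (μ I).toReal :=
  ENNReal.toReal_pos (T.pos I hI).ne' (measure_ne_top μ I)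

theorem avg_nonneg (h0φ : ∀ x, 0 ≤ φ x) {I : Set X} (hI : I ∈ T.mem) :
    0 ≤ trAvg μ φ I :=
  mul_nonneg (inv_nonneg.mpr ENNReal.toReal_nonneg)
    (setIntegral_nonneg (T.meas I hI) fun x _ => h0φ x)

theorem avg_mul {I : Set X} (hI : I ∈ T.mem) :
    trAvg μ φ I * (μ I).toReal = ∫ x in I, φ x ∂μ := by
  unfold trAvg
  rw [mul_comm ((μ I).toReal)⁻¹, mul_assoc, inv_mul_cancel₀ (muReal_pos hI).ne', mul_one]

theorem trMax_apply (h0φ : ∀ x, 0 ≤ φ x) (x : X) :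
    trMax μ T φ x = sSup {r : ℝ | ∃ I ∈ T.mem, x ∈ I ∧ r = trAvg μ φ I} := by
  have h : (fun y => |φ y|) = φ := funext fun y => abs_of_nonneg (h0φ y)
  unfold trMax
  rw [h]

theorem bddAbove_of_mem_trA (hlU : T.mem = ⋃ m, lvl m) (hl0 : lvl 0 = {Set.univ})
    (hlS : ∀ m, lvl (m + 1) = ⋃ I ∈ lvl m, T.child I)
    (h0φ : ∀ x, 0 ≤ φ x) (hint : Integrable φ μ)
    {z : X} {L : Set X} (hz : z ∈ trA μ T φ L) :
    BddAbove {r : ℝ | ∃ K ∈ T.mem, z ∈ K ∧ r = trAvg μ φ K} := by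
  obtain ⟨hzb, hL, hzL, hMz, hmax⟩ := hz
  by_contra hb
  have hM0 : trMax μ T φ z = 0 := by
    rw [trMax_apply h0φ]; exact Real.sSup_of_not_bddAbove hb
  have hAvL : trAvg μ φ L = 0 := by rw [← hMz, hM0]
  have hIntL : ∫ x in L, φ x ∂μ = 0 := by
    unfold trAvg at hAvL
    rcases mul_eq_zero.mp hAvL with h | h
    · exact absurd h (inv_ne_zero (muReal_pos hL).ne')
    · exact h
  apply hb
  refine ⟨(μ L).toReal⁻¹ * ∫ x, φ x ∂μ, ?_⟩
  rintro r ⟨K, hK, hzK, rfl⟩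
  rcases tree_chain hlU hl0 hlS hK hL ⟨z, hzK, hzL⟩ with hKL | hLK
  · have h1 : ∫ x in K, φ x ∂μ ≤ 0 := by
      rw [← hIntL]
      exact setIntegral_mono_set hint.integrableOn
        (Filter.Eventually.of_forall fun x => h0φ x) hKL.eventuallyLE
    have h2 : 0 ≤ ∫ x in K, φ x ∂μ := setIntegral_nonneg (T.meas K hK) fun x _ => h0φ x
    have hz0 : trAvg μ φ K = 0 := by
      unfold trAvg; rw [le_antisymm h1 h2, mul_zero]
    rw [hz0]
    exact mul_nonneg (inv_nonneg.mpr ENNReal.toReal_nonneg) (integral_nonneg h0φ)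
  · unfold trAvg
    have h3 : ∫ x in K, φ x ∂μ ≤ ∫ x, φ x ∂μ := by
      have h3' : ∫ x in K, φ x ∂μ ≤ ∫ x in (Set.univ : Set X), φ x ∂μ :=
        setIntegral_mono_set hint.integrableOn
          (Filter.Eventually.of_forall fun x => h0φ x) (subset_univ K).eventuallyLE
      rwa [setIntegral_univ] at h3'
    have hinv : (μ K).toReal⁻¹ ≤ (μ L).toReal⁻¹ := by
      apply inv_anti₀ (muReal_pos hL)
      exact (ENNReal.toReal_le_toReal (measure_ne_top μ L) (measure_ne_top μ K)).mpr
        (measure_mono hLK)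
    exact mul_le_mul hinv h3 (setIntegral_nonneg (T.meas K hK) fun x _ => h0φ x)
      (inv_nonneg.mpr ENNReal.toReal_nonneg)

theorem avg_lt_of_mem_trA (hlU : T.mem = ⋃ m, lvl m) (hl0 : lvl 0 = {Set.univ})
    (hlS : ∀ m, lvl (m + 1) = ⋃ I ∈ lvl m, T.child I)
    (h0φ : ∀ x, 0 ≤ φ x) (hint : Integrable φ μ)
    {y : X} {J P : Set X} (hy : y ∈ trA μ T φ J) (hP : P ∈ T.mem) (hss : J ⊂ P) :
    trAvg μ φ P < trAvg μ φ J := by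
  have hbdd := bddAbove_of_mem_trA hlU hl0 hlS h0φ hint hy
  obtain ⟨hyb, hJ, hyJ, hMy, hmax⟩ := hy
  have hPy : trAvg μ φ P ∈ {r : ℝ | ∃ K ∈ T.mem, y ∈ K ∧ r = trAvg μ φ K} :=
    ⟨P, hP, hss.subset hyJ, rfl⟩
  have hle : trAvg μ φ P ≤ trAvg μ φ J := by
    rw [← hMy, trMax_apply h0φ]
    exact le_csSup hbdd hPy
  rcases lt_or_eq_of_le hle with h | h
  · exact h
  · exact absurd (hmax P hP (hss.subset hyJ) (hMy.trans h.symm)) hss.not_subset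

end S7Aux
namespace S7Aux

set_option linter.unusedSectionVars false

variable {X : Type*} [MeasurableSpace X]
variable {μ : Measure X} [IsProbabilityMeasure μ] {T : DTree X μ} {φ : X → ℝ}
  {lvl : ℕ → Set (Set X)}

theorem good_pos (hlU : T.mem = ⋃ m, lvl m) (hl0 : lvl 0 = {Set.univ})
    (hlS : ∀ m, lvl (m + 1) = ⋃ I ∈ lvl m, T.child I)
    (h0φ : ∀ x, 0 ≤ φ x) (hint : Integrable φ μ)
    {K : Set X} (hK : K ∈ T.mem) :
    ∃ B : Set X, B ⊆ K ∧ 0 < μ B ∧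
      ∀ y ∈ B, ∀ L ∈ T.mem, y ∈ L → L ⊆ K → trAvg μ φ L ≤ trAvg μ φ K := by
  classical
  set c := trAvg μ φ K with hc
  set M : Set (Set X) :=
    {L | L ∈ T.mem ∧ L ⊆ K ∧ c < trAvg μ φ L ∧
      ∀ L' ∈ T.mem, L ⊂ L' → L' ⊆ K → trAvg μ φ L' ≤ c} with hMdef
  have hMsub : ∀ L ∈ M, L ∈ T.mem := fun L hL => hL.1
  set U := ⋃₀ M with hU0
  have hUK : U ⊆ K := sUnion_subset fun L hL => hL.2.1
  refine ⟨K \ U, diff_subset, ?_, ?_⟩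
  · -- positivity
    by_contra hpos
    push_neg at hpos
    have hKU0 : μ (K \ U) = 0 := le_antisymm hpos zero_le
    have hMc : M.Countable := (mem_countable hlU hl0 hlS).mono hMsub
    have hMpd : M.Pairwise Disjoint := by
      intro L1 h1 L2 h2 hne
      by_contra hnd
      rw [Set.not_disjoint_iff] at hnd
      obtain ⟨x, hx1, hx2⟩ := hnd
      rcases tree_chain hlU hl0 hlS h1.1 h2.1 ⟨x, hx1, hx2⟩ with hsub | hsub
      · exact absurd (h1.2.2.2 L2 h2.1 (ssubset_of_subset_of_ne hsub hne) h2.2.1)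
          (not_le.mpr h2.2.2.1)
      · exact absurd (h2.2.2.2 L1 h1.1 (ssubset_of_subset_of_ne hsub (Ne.symm hne)) h1.2.1)
          (not_le.mpr h1.2.2.1)
    have hcnt : Countable ↥M := hMc.to_subtype
    have hUiU : U = ⋃ (L : M), (L : Set X) := by rw [hU0, sUnion_eq_iUnion]
    have hmeas : ∀ L : M, MeasurableSet (L : Set X) := fun L => T.meas L (hMsub L L.2)
    have hpw : Pairwise (Function.onFun Disjoint fun L : M => (L : Set X)) := fun a b hab =>
      hMpd a.2 b.2 fun h => hab (Subtype.ext h)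
    have hμU : μ U = ∑' L : M, μ (L : Set X) := by
      rw [hUiU]; exact measure_iUnion hpw hmeas
    have hμUK : μ U = μ K := by
      have hdd : K \ (K \ U) = U := Set.diff_diff_cancel_left hUK
      calc μ U = μ (K \ (K \ U)) := by rw [hdd]
        _ = μ K := measure_diff_null hKU0
    have haeU : U =ᵐ[μ] K := by
      rw [MeasureTheory.ae_eq_set]
      refine ⟨?_, hKU0⟩
      rw [Set.diff_eq_empty.mpr hUK]
      exact measure_empty
    have hIntU : ∫ x in U, φ x ∂μ = ∫ x in K, φ x ∂μ := setIntegral_congr_set haeU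
    have hhs : HasSum (fun L : M => ∫ x in (L : Set X), φ x ∂μ) (∫ x in U, φ x ∂μ) := by
      rw [hUiU]
      exact hasSum_integral_iUnion hmeas hpw hint.integrableOn
    have hMne : M.Nonempty := by
      rcases Set.eq_empty_or_nonempty M with h | h
      · exfalso
        have hUe : U = ∅ := by rw [hU0, h, sUnion_empty]
        rw [hUe, Set.diff_empty] at hKU0
        exact (T.pos K hK).ne' hKU0
      · exact h
    obtain ⟨L0, hL0⟩ := hMne
    have hμsum : ∑' L : M, μ (L : Set X) ≠ ⊤ := by rw [← hμU]; exact measure_ne_top μ U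
    have hsummu : Summable fun L : M => (μ (L : Set X)).toReal := ENNReal.summable_toReal hμsum
    have hgsum : Summable fun L : M => c * (μ (L : Set X)).toReal := hsummu.mul_left c
    have hlt : ∀ L : M, c * (μ (L : Set X)).toReal < ∫ x in (L : Set X), φ x ∂μ := by
      intro L
      have h1 : c < trAvg μ φ (L : Set X) := L.2.2.2.1
      have h2 : 0 < (μ (L : Set X)).toReal := muReal_pos (hMsub L L.2)
      unfold trAvg at h1
      rw [inv_mul_eq_div] at h1
      exact (lt_div_iff₀ h2).mp h1
    have hsum_lt : (∑' L : M, c * (μ (L : Set X)).toReal) <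
        ∑' L : M, ∫ x in (L : Set X), φ x ∂μ :=
      Summable.tsum_lt_tsum (i := ⟨L0, hL0⟩) (fun L => (hlt L).le) (hlt ⟨L0, hL0⟩) hgsum hhs.summable
    have h2 : (∑' L : M, c * (μ (L : Set X)).toReal) = c * (μ K).toReal := by
      rw [tsum_mul_left]
      congr 1
      rw [← ENNReal.tsum_toReal_eq fun L => measure_ne_top μ _, ← hμU, hμUK]
    have h3 : (∑' L : M, ∫ x in (L : Set X), φ x ∂μ) = ∫ x in K, φ x ∂μ :=
      hhs.tsum_eq.trans hIntU
    rw [h2, h3] at hsum_lt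
    have h4 : c * (μ K).toReal = ∫ x in K, φ x ∂μ := avg_mul hK
    rw [h4] at hsum_lt
    exact lt_irrefl _ hsum_lt
  · -- the averaging property
    intro y hy L hL hyL hLK
    by_contra hgt
    push_neg at hgt
    obtain ⟨J, hJ, hyJ, ⟨hJK, hJavg⟩, hJmax⟩ :=
      exists_maximal hlU hl0 hlS (fun L => L ⊆ K ∧ c < trAvg μ φ L) ⟨L, hL, hyL, hLK, hgt⟩
    have hJM : J ∈ M := by
      refine ⟨hJ, hJK, hJavg, ?_⟩
      intro L' hL' hss hL'K
      by_contra hgt'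
      push_neg at hgt'
      exact hJmax L' hL' (hss.subset hyJ) ⟨hL'K, hgt'⟩ hss
    exact hy.2 (Set.mem_sUnion.mpr ⟨J, hJM, hyJ⟩)

end S7Aux
set_option maxHeartbeats 1000000 in
/-- for `I ∈ S_φ`, `A(φ,I) = I \ ⋃ {J ∈ S_φ : J* = I}` and
`μ(A(φ,I)) = μ(I) - Σ_{J ∈ S_φ, J* = I} μ(J)`. -/
theorem statement7 {X : Type*} [MeasurableSpace X] (μ : Measure X)
    [IsProbabilityMeasure μ] [NullSingletonClass μ] (T : DTree X μ)
    (φ : X → ℝ) (h0 : ∀ x, 0 ≤ φ x) (hint : Integrable φ μ) (hgood : TGood μ T φ)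
    (I : Set X) (hI : I ∈ trS μ T φ) :
    trA μ T φ I = I \ ⋃₀ {J | J ∈ trS μ T φ ∧ IsStarOf μ T φ J I} ∧
    μ (trA μ T φ I) =
      μ I - ∑' J : {J | J ∈ trS μ T φ ∧ IsStarOf μ T φ J I}, μ (J : Set X) := by
  classical
  obtain ⟨lvl, hl0, hlS, hlU, -⟩ := T.generated
  have hImem : I ∈ T.mem := by
    rcases hI with h | h
    · exact h.1
    · rw [Set.mem_singleton_iff] at h; rw [h]; exact T.top_mem
  -- every strict ancestor of I has strictly smaller average
  have hanc : ∀ P ∈ T.mem, I ⊂ P → trAvg μ φ P < trAvg μ φ I := by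
    intro P hP hss
    rcases hI with h | h
    · obtain ⟨y, hy⟩ := nonempty_of_measure_ne_zero h.2.ne'
      exact S7Aux.avg_lt_of_mem_trA hlU hl0 hlS h0 hint hy hP hss
    · rw [Set.mem_singleton_iff] at h
      subst h
      exact absurd (subset_univ P) hss.not_subset
  -- the forward inclusion
  have hsub1 : trA μ T φ I ⊆ I \ ⋃₀ {J | J ∈ trS μ T φ ∧ IsStarOf μ T φ J I} := by
    intro x hx
    obtain ⟨hxb, -, hxI, hxM, hxmax⟩ := hx
    refine ⟨hxI, ?_⟩
    rintro ⟨J, ⟨hJS, hIS2, hJI, hJmin⟩, hxJ⟩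
    have hJmp : J ∈ T.mem ∧ 0 < μ (trA μ T φ J) := by
      rcases hJS with h | h
      · exact h
      · rw [Set.mem_singleton_iff] at h; subst h
        exact absurd (subset_univ I) hJI.not_subset
    obtain ⟨y, hy⟩ := nonempty_of_measure_ne_zero hJmp.2.ne'
    have h1 : trAvg μ φ I < trAvg μ φ J :=
      S7Aux.avg_lt_of_mem_trA hlU hl0 hlS h0 hint hy hImem hJI
    have hxA : x ∈ trA μ T φ I := ⟨hxb, hImem, hxI, hxM, hxmax⟩
    have hbdd := S7Aux.bddAbove_of_mem_trA hlU hl0 hlS h0 hint hxA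
    have h2 : trAvg μ φ J ≤ trMax μ T φ x := by
      rw [S7Aux.trMax_apply h0]
      exact le_csSup hbdd ⟨J, hJmp.1, hxJ, rfl⟩
    rw [hxM] at h2
    exact absurd h2 (not_le.mpr h1)
  -- the reverse inclusion
  have hsub2 : I \ ⋃₀ {J | J ∈ trS μ T φ ∧ IsStarOf μ T φ J I} ⊆ trA μ T φ I := by
    rintro x ⟨hxI, hxU⟩
    -- no element of S_φ strictly inside I contains x
    have hnoS : ¬∃ J, J ∈ T.mem ∧ 0 < μ (trA μ T φ J) ∧ x ∈ J ∧ J ⊂ I := by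
      rintro ⟨J0, hJ0, hpos0, hxJ0, hss0⟩
      obtain ⟨J, hJmem, hxJ, ⟨hpos, hssI⟩, hmax⟩ :=
        S7Aux.exists_maximal hlU hl0 hlS
          (fun J => 0 < μ (trA μ T φ J) ∧ J ⊂ I) ⟨J0, hJ0, hxJ0, hpos0, hss0⟩
      apply hxU
      refine Set.mem_sUnion.mpr ⟨J, ⟨Or.inl ⟨hJmem, hpos⟩, hI, hssI, ?_⟩, hxJ⟩
      intro K hKS hJK
      rcases hKS with hK | hK
      · have hxK : x ∈ K := hJK.subset hxJ
        rcases S7Aux.tree_chain hlU hl0 hlS hK.1 hImem ⟨x, hxK, hxI⟩ with hKI | hIK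
        · by_cases hKeq : K = I
          · exact hKeq ▸ subset_rfl
          · exact absurd hJK
              (hmax K hK.1 hxK ⟨hK.2, ssubset_of_subset_of_ne hKI hKeq⟩)
        · exact hIK
      · rw [Set.mem_singleton_iff] at hK; rw [hK]; exact subset_univ I
    -- every tree set strictly inside I containing x has average at most that of I
    have hdesc : ∀ K ∈ T.mem, x ∈ K → K ⊂ I → trAvg μ φ K ≤ trAvg μ φ I := by
      intro K hK hxK hss
      by_contra hgt
      push_neg at hgt
      obtain ⟨K', hK', hxK', ⟨hssI', hgt'⟩, hmax'⟩ :=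
        S7Aux.exists_maximal hlU hl0 hlS
          (fun K => K ⊂ I ∧ trAvg μ φ I < trAvg μ φ K) ⟨K, hK, hxK, hss, hgt⟩
      obtain ⟨B, hBK, hBpos, hBprop⟩ := S7Aux.good_pos hlU hl0 hlS h0 hint hK'
      have hanc' : ∀ P ∈ T.mem, K' ⊂ P → trAvg μ φ P < trAvg μ φ K' := by
        intro P hP hssP
        have hxP : x ∈ P := hssP.subset hxK'
        rcases S7Aux.tree_chain hlU hl0 hlS hP hImem ⟨x, hxP, hxI⟩ with hPI | hIP
        · by_cases hPeq : P = I
          · rw [hPeq]; exact hgt'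
          · have hPs : P ⊂ I := ssubset_of_subset_of_ne hPI hPeq
            have hnot : ¬trAvg μ φ I < trAvg μ φ P := fun hc =>
              hmax' P hP hxP ⟨hPs, hc⟩ hssP
            push_neg at hnot
            exact hnot.trans_lt hgt'
        · by_cases hIeq : I = P
          · rw [← hIeq]; exact hgt'
          · exact (hanc P hP (ssubset_of_subset_of_ne hIP hIeq)).trans hgt'
      have hBA : B ⊆ trA μ T φ K' := by
        intro y hyB
        have hyK' : y ∈ K' := hBK hyB
        have hub : ∀ r ∈ {r : ℝ | ∃ L ∈ T.mem, y ∈ L ∧ r = trAvg μ φ L},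
            r ≤ trAvg μ φ K' := by
          rintro r ⟨L, hL, hyL, rfl⟩
          rcases S7Aux.tree_chain hlU hl0 hlS hL hK' ⟨y, hyL, hyK'⟩ with hLK | hKL
          · exact hBprop y hyB L hL hyL hLK
          · by_cases hLeq : K' = L
            · rw [← hLeq]
            · exact (hanc' L hL (ssubset_of_subset_of_ne hKL hLeq)).le
        have hMy : trMax μ T φ y = trAvg μ φ K' := by
          rw [S7Aux.trMax_apply h0]
          refine le_antisymm (csSup_le ⟨trAvg μ φ K', K', hK', hyK', rfl⟩ hub) ?_
          exact le_csSup ⟨trAvg μ φ K', hub⟩ ⟨K', hK', hyK', rfl⟩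
        refine ⟨?_, hK', hyK', hMy, ?_⟩
        · intro hbad
          have := hbad K' hK' hyK'
          rw [hMy] at this
          exact lt_irrefl _ this
        · intro P hP hyP hMP
          rcases S7Aux.tree_chain hlU hl0 hlS hP hK' ⟨y, hyP, hyK'⟩ with hPK | hKP
          · exact hPK
          · by_cases hPeq : K' = P
            · rw [← hPeq]
            · exfalso
              have hlt := hanc' P hP (ssubset_of_subset_of_ne hKP hPeq)
              rw [← hMP, hMy] at hlt
              exact lt_irrefl _ hlt
      have hposA : 0 < μ (trA μ T φ K') := lt_of_lt_of_le hBpos (measure_mono hBA)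
      exact hnoS ⟨K', hK', hposA, hxK', hssI'⟩
    -- conclude x ∈ trA I
    have hub : ∀ r ∈ {r : ℝ | ∃ L ∈ T.mem, x ∈ L ∧ r = trAvg μ φ L},
        r ≤ trAvg μ φ I := by
      rintro r ⟨L, hL, hxL, rfl⟩
      rcases S7Aux.tree_chain hlU hl0 hlS hL hImem ⟨x, hxL, hxI⟩ with hLI | hIL
      · by_cases hLeq : L = I
        · rw [hLeq]
        · exact hdesc L hL hxL (ssubset_of_subset_of_ne hLI hLeq)
      · by_cases hIeq : I = L
        · rw [← hIeq]
        · exact (hanc L hL (ssubset_of_subset_of_ne hIL hIeq)).le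
    have hMx : trMax μ T φ x = trAvg μ φ I := by
      rw [S7Aux.trMax_apply h0]
      refine le_antisymm (csSup_le ⟨trAvg μ φ I, I, hImem, hxI, rfl⟩ hub) ?_
      exact le_csSup ⟨trAvg μ φ I, hub⟩ ⟨I, hImem, hxI, rfl⟩
    refine ⟨?_, hImem, hxI, hMx, ?_⟩
    · intro hbad
      have := hbad I hImem hxI
      rw [hMx] at this
      exact lt_irrefl _ this
    · intro P hP hxP hMP
      rcases S7Aux.tree_chain hlU hl0 hlS hP hImem ⟨x, hxP, hxI⟩ with hPI | hIP
      · exact hPI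
      · by_cases hPeq : I = P
        · rw [← hPeq]
        · exfalso
          have hlt := hanc P hP (ssubset_of_subset_of_ne hIP hPeq)
          rw [← hMP, hMx] at hlt
          exact lt_irrefl _ hlt
  have hpart1 : trA μ T φ I = I \ ⋃₀ {J | J ∈ trS μ T φ ∧ IsStarOf μ T φ J I} :=
    Set.Subset.antisymm hsub1 hsub2
  refine ⟨hpart1, ?_⟩
  have hFmem : ∀ J ∈ {J | J ∈ trS μ T φ ∧ IsStarOf μ T φ J I},
      J ∈ T.mem ∧ 0 < μ (trA μ T φ J) := by
    rintro J ⟨hJS, -, hJI, -⟩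
    rcases hJS with h | h
    · exact h
    · rw [Set.mem_singleton_iff] at h; subst h
      exact absurd (subset_univ I) hJI.not_subset
  have hFc : Set.Countable {J | J ∈ trS μ T φ ∧ IsStarOf μ T φ J I} :=
    (S7Aux.mem_countable hlU hl0 hlS).mono fun J hJ => (hFmem J hJ).1
  have hFpd : Set.Pairwise {J | J ∈ trS μ T φ ∧ IsStarOf μ T φ J I} Disjoint := by
    intro J1 h1 J2 h2 hne
    by_contra hnd
    rw [Set.not_disjoint_iff] at hnd
    obtain ⟨x, hx1, hx2⟩ := hnd
    rcases S7Aux.tree_chain hlU hl0 hlS (hFmem J1 h1).1 (hFmem J2 h2).1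
      ⟨x, hx1, hx2⟩ with hs | hs
    · have hIJ2 : I ⊆ J2 := h1.2.2.2 J2 h2.1 (ssubset_of_subset_of_ne hs hne)
      exact h2.2.2.1.not_subset hIJ2
    · have hIJ1 : I ⊆ J1 := h2.2.2.2 J1 h1.1 (ssubset_of_subset_of_ne hs (Ne.symm hne))
      exact h1.2.2.1.not_subset hIJ1
  have hμUF : μ (⋃₀ {J | J ∈ trS μ T φ ∧ IsStarOf μ T φ J I}) =
      ∑' J : {J | J ∈ trS μ T φ ∧ IsStarOf μ T φ J I}, μ (J : Set X) :=
    measure_sUnion hFc hFpd fun J hJ => T.meas J (hFmem J hJ).1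
  have hUFI : ⋃₀ {J | J ∈ trS μ T φ ∧ IsStarOf μ T φ J I} ⊆ I :=
    sUnion_subset fun J hJ => hJ.2.2.1.subset
  have hmeasUF : NullMeasurableSet (⋃₀ {J | J ∈ trS μ T φ ∧ IsStarOf μ T φ J I}) μ :=
    (MeasurableSet.sUnion hFc fun J hJ => T.meas J (hFmem J hJ).1).nullMeasurableSet
  rw [hpart1, measure_diff hUFI hmeasUF (measure_ne_top μ _), hμUF]

end
end
end

section
/- Let q ∈ (0,1) be fixed. Then: (i) the function ω_q : [1,∞) → [1,∞) is strictly increasing and strictly concave; (ii) the function U_q(x) = ω_q(x)/x is strictly increasing on [1,∞). -/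
open MeasureTheory Filter Set

noncomputable section

namespace Statement8Aux

/-- inverse of `ω_q` : `K_q(w) = (1-q) w + q w^((q-1)/q)`. -/
def funK (q w : ℝ) : ℝ := (1 - q) * w + q * w ^ ((q - 1) / q)

lemma funH_one (q : ℝ) : funH q 1 = 1 := by simp [funH]

lemma hasDerivAt_funH {q y : ℝ} (hy : (0:ℝ) < y) :
    HasDerivAt (funH q)
      ((1 - q) * (q * y ^ (q - 1)) + q * ((q - 1) * y ^ (q - 1 - 1))) y := by
  have h1 := Real.hasDerivAt_rpow_const (x := y) (p := q) (Or.inl hy.ne')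
  have h2 := Real.hasDerivAt_rpow_const (x := y) (p := q - 1) (Or.inl hy.ne')
  exact (h1.const_mul (1 - q)).add (h2.const_mul q)

lemma funH_contOn {q : ℝ} : ContinuousOn (funH q) (Ici 1) := fun z hz =>
  (hasDerivAt_funH (lt_of_lt_of_le one_pos hz)).continuousAt.continuousWithinAt

lemma funH_strictMono {q : ℝ} (hq0 : 0 < q) (hq1 : q < 1) :
    StrictMonoOn (funH q) (Ici 1) := by
  apply strictMonoOn_of_deriv_pos (convex_Ici 1) funH_contOn
  intro x hx
  rw [interior_Ici] at hx
  have hx0 : (0:ℝ) < x := lt_trans one_pos hx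
  rw [(hasDerivAt_funH hx0).deriv]
  have h : x ^ (q - 1 - 1) < x ^ (q - 1) :=
    Real.rpow_lt_rpow_of_exponent_lt hx (by linarith)
  nlinarith [mul_pos (mul_pos hq0 (by linarith : (0:ℝ) < 1 - q)) (sub_pos.2 h)]

lemma funH_surjOn {q : ℝ} (hq0 : 0 < q) (hq1 : q < 1) :
    SurjOn (funH q) (Ici 1) (Ici 1) := by
  intro z hz
  have hz1 : (1:ℝ) ≤ z := hz
  set y := max 1 ((z / (1 - q)) ^ q⁻¹) with hy
  have hy1 : (1:ℝ) ≤ y := le_max_left _ _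
  have hy0 : (0:ℝ) ≤ y := by linarith
  have hzq : 0 ≤ z / (1 - q) := div_nonneg (by linarith) (by linarith)
  have hyz : z ≤ funH q y := by
    have h0 : ((z / (1 - q)) ^ q⁻¹) ^ q = z / (1 - q) := by
      rw [← Real.rpow_mul hzq, inv_mul_cancel₀ hq0.ne', Real.rpow_one]
    have h1 : z / (1 - q) ≤ y ^ q := by
      rw [← h0]
      exact Real.rpow_le_rpow (Real.rpow_nonneg hzq _) (le_max_right _ _) hq0.le
    have h2 : z ≤ (1 - q) * y ^ q := by
      have := mul_le_mul_of_nonneg_left h1 (by linarith : (0:ℝ) ≤ 1 - q)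
      rwa [mul_div_cancel₀ _ (by linarith : (1:ℝ) - q ≠ 0)] at this
    have h3 : 0 ≤ q * y ^ (q - 1) :=
      mul_nonneg hq0.le (Real.rpow_nonneg hy0 _)
    unfold funH; linarith
  have hmem : z ∈ Icc (funH q 1) (funH q y) := by
    rw [funH_one]; exact ⟨hz1, hyz⟩
  obtain ⟨w, hw, hwz⟩ :=
    intermediate_value_Icc hy1 (funH_contOn.mono Icc_subset_Ici_self) hmem
  exact ⟨w, hw.1, hwz⟩

lemma hasDerivAt_funK' {q w : ℝ} (hw : (0:ℝ) < w) :
    HasDerivAt (funK q)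
      ((1 - q) * 1 + q * ((q - 1) / q * w ^ ((q - 1) / q - 1))) w := by
  have h1 := (hasDerivAt_id w).const_mul (1 - q)
  have h2 := (Real.hasDerivAt_rpow_const (x := w) (p := (q - 1) / q)
    (Or.inl hw.ne')).const_mul q
  exact h1.add h2

lemma funK_contOn' {q : ℝ} : ContinuousOn (funK q) (Ici 1) := fun z hz =>
  (hasDerivAt_funK' (lt_of_lt_of_le one_pos hz)).continuousAt.continuousWithinAt

section g

variable {q : ℝ} (hq0 : 0 < q) (hq1 : q < 1)
include hq0 hq1

lemma g_mem {z : ℝ} (hz : z ∈ Ici (1:ℝ)) :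
    Function.invFunOn (funH q) (Ici 1) z ∈ Ici (1:ℝ) :=
  Function.invFunOn_mem (funH_surjOn hq0 hq1 hz)

lemma funH_g {z : ℝ} (hz : z ∈ Ici (1:ℝ)) :
    funH q (Function.invFunOn (funH q) (Ici 1) z) = z :=
  Function.invFunOn_eq (funH_surjOn hq0 hq1 hz)

lemma g_strictMono :
    StrictMonoOn (Function.invFunOn (funH q) (Ici 1)) (Ici 1) := by
  intro a ha b hb hab
  by_contra h
  push_neg at h
  have := (funH_strictMono hq0 hq1).monotoneOn (g_mem hq0 hq1 hb) (g_mem hq0 hq1 ha) h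
  rw [funH_g hq0 hq1 ha, funH_g hq0 hq1 hb] at this
  exact absurd this (not_le.2 hab)

lemma g_pos {z : ℝ} (hz : z ∈ Ici (1:ℝ)) :
    (0:ℝ) < Function.invFunOn (funH q) (Ici 1) z :=
  lt_of_lt_of_le one_pos (g_mem hq0 hq1 hz)

lemma one_le_omega {z : ℝ} (hz : z ∈ Ici (1:ℝ)) : 1 ≤ funOmega q z :=
  Real.one_le_rpow (g_mem hq0 hq1 hz) hq0.le

lemma omega_strictMono : StrictMonoOn (funOmega q) (Ici 1) := by
  intro a ha b hb hab
  exact Real.rpow_lt_rpow (g_pos hq0 hq1 ha).le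
    (g_strictMono hq0 hq1 ha hb hab) hq0

lemma funK_omega {z : ℝ} (hz : z ∈ Ici (1:ℝ)) : funK q (funOmega q z) = z := by
  set u := Function.invFunOn (funH q) (Ici 1) z with hu
  have hu0 : (0:ℝ) < u := g_pos hq0 hq1 hz
  have h : (u ^ q) ^ ((q - 1) / q) = u ^ (q - 1) := by
    rw [← Real.rpow_mul hu0.le]
    congr 1
    rw [mul_comm]
    exact div_mul_cancel₀ _ hq0.ne'
  show (1 - q) * u ^ q + q * (u ^ q) ^ ((q - 1) / q) = z
  rw [h]
  exact funH_g hq0 hq1 hz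

lemma deriv_funK {w : ℝ} (hw : (0:ℝ) < w) :
    deriv (funK q) w = (1 - q) + (q - 1) * w ^ ((q - 1) / q - 1) := by
  rw [(hasDerivAt_funK' hw).deriv, mul_one]
  have hc : q * ((q - 1) / q * w ^ ((q - 1) / q - 1))
      = (q - 1) * w ^ ((q - 1) / q - 1) := by
    rw [← mul_assoc, mul_comm q ((q - 1) / q), div_mul_cancel₀ _ hq0.ne']
  rw [hc]

lemma funK_strictConvex : StrictConvexOn ℝ (Ici 1) (funK q) := by
  apply strictConvexOn_of_deriv2_pos (convex_Ici 1) funK_contOn'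
  intro x hx
  rw [interior_Ici] at hx
  have hx0 : (0:ℝ) < x := lt_trans one_pos hx
  have heq : deriv (funK q) =ᶠ[nhds x]
      (fun w => (1 - q) + (q - 1) * w ^ ((q - 1) / q - 1)) := by
    filter_upwards [Ioi_mem_nhds hx0] with w hw
    exact deriv_funK hq0 hq1 (mem_Ioi.mp hw)
  have hd : HasDerivAt (fun w : ℝ => (1 - q) + (q - 1) * w ^ ((q - 1) / q - 1))
      (0 + (q - 1) * (((q - 1) / q - 1) * x ^ ((q - 1) / q - 1 - 1))) x := by
    have h2 := (Real.hasDerivAt_rpow_const (x := x) (p := (q - 1) / q - 1)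
      (Or.inl hx0.ne')).const_mul (q - 1)
    exact (hasDerivAt_const x (1 - q)).add h2
  show 0 < deriv (deriv (funK q)) x
  rw [heq.deriv_eq, hd.deriv]
  have hne : q ≠ 0 := hq0.ne'
  have he : (q - 1) / q - 1 = -q⁻¹ := by
    field_simp
    ring
  rw [he]
  have hP : (0:ℝ) < x ^ (-q⁻¹ - 1) := Real.rpow_pos_of_pos hx0 _
  have hq' : (0:ℝ) < q⁻¹ := inv_pos.2 hq0
  nlinarith [mul_pos (mul_pos (by linarith : (0:ℝ) < 1 - q) hq') hP]

lemma key_concave {x y a b : ℝ} (hx : x ∈ Ici (1:ℝ)) (hy : y ∈ Ici (1:ℝ))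
    (hxy : x < y) (ha : 0 < a) (hb : 0 < b) (hab : a + b = 1) :
    a * funOmega q x + b * funOmega q y < funOmega q (a * x + b * y) := by
  have hx1 : (1:ℝ) ≤ x := hx
  have hy1 : (1:ℝ) ≤ y := hy
  set w1 := funOmega q x with hw1
  set w2 := funOmega q y with hw2
  have hw1' : (1:ℝ) ≤ w1 := one_le_omega hq0 hq1 hx
  have hw2' : (1:ℝ) ≤ w2 := one_le_omega hq0 hq1 hy
  have hwlt : w1 < w2 := omega_strictMono hq0 hq1 hx hy hxy
  set m := a * w1 + b * w2 with hm
  have hm1 : (1:ℝ) ≤ m := by nlinarith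
  have hm0 : (0:ℝ) ≤ m := by linarith
  -- z0 realizes ω z0 = m
  set v := m ^ q⁻¹ with hv
  have hv1 : (1:ℝ) ≤ v := Real.one_le_rpow hm1 (inv_nonneg.2 hq0.le)
  set z0 := funH q v with hz0def
  have hz0 : z0 ∈ Ici (1:ℝ) := by
    have := (funH_strictMono hq0 hq1).monotoneOn (le_refl (1:ℝ)) hv1 hv1
    rw [funH_one] at this
    exact this
  have hgz0 : Function.invFunOn (funH q) (Ici 1) z0 = v :=
    (funH_strictMono hq0 hq1).injOn.leftInvOn_invFunOn hv1
  have homega_z0 : funOmega q z0 = m := by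
    show (Function.invFunOn (funH q) (Ici 1) z0) ^ q = m
    rw [hgz0, hv, ← Real.rpow_mul hm0, inv_mul_cancel₀ hq0.ne', Real.rpow_one]
  have hKm : funK q m = z0 := by
    rw [← homega_z0]
    exact funK_omega hq0 hq1 hz0
  -- strict convexity of K
  have hK := (funK_strictConvex hq0 hq1).2 hw1' hw2' (ne_of_lt hwlt) ha hb hab
  simp only [smul_eq_mul] at hK
  rw [hw1, hw2, funK_omega hq0 hq1 hx, funK_omega hq0 hq1 hy] at hK
  -- hK : funK q (a * w1 + b * w2) < a * x + b * y ... careful with order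
  have hz0lt : z0 < a * x + b * y := by
    rw [← hKm, hm, hw1, hw2]
    exact hK
  have haxby : a * x + b * y ∈ Ici (1:ℝ) := by
    simp only [mem_Ici]; nlinarith
  have := omega_strictMono hq0 hq1 hz0 haxby hz0lt
  rw [homega_z0] at this
  exact this

end g

end Statement8Aux

open Statement8Aux in
/-- `ω_q` is strictly increasing and strictly concave on `[1,∞)`,
and `x ↦ ω_q(x)/x` is strictly increasing on `[1,∞)`. -/
theorem statement8 (q : ℝ) (hq : q ∈ Set.Ioo (0 : ℝ) 1) :
    StrictMonoOn (funOmega q) (Set.Ici 1) ∧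
    StrictConcaveOn ℝ (Set.Ici 1) (funOmega q) ∧
    StrictMonoOn (fun x => funOmega q x / x) (Set.Ici 1) := by
  obtain ⟨hq0, hq1⟩ := hq
  refine ⟨omega_strictMono hq0 hq1, ?_, ?_⟩
  · refine ⟨convex_Ici 1, fun x hx y hy hxy a b ha hb hab => ?_⟩
    simp only [smul_eq_mul]
    rcases lt_or_gt_of_ne hxy with h | h
    · exact key_concave hq0 hq1 hx hy h ha hb hab
    · have := key_concave hq0 hq1 hy hx h hb ha (by linarith)
      calc a * funOmega q x + b * funOmega q y
          = b * funOmega q y + a * funOmega q x := by ring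
        _ < funOmega q (b * y + a * x) := this
        _ = funOmega q (a * x + b * y) := by rw [add_comm]
  · intro x hx y hy hxy
    have hx1 : (1:ℝ) ≤ x := hx
    have hy1 : (1:ℝ) ≤ y := hy
    set u1 := Function.invFunOn (funH q) (Ici 1) x with hu1
    set u2 := Function.invFunOn (funH q) (Ici 1) y with hu2
    have h11 : (1:ℝ) ≤ u1 := g_mem hq0 hq1 hx
    have h12 : (1:ℝ) ≤ u2 := g_mem hq0 hq1 hy
    have hp1 : (0:ℝ) < u1 := by linarith
    have hp2 : (0:ℝ) < u2 := by linarith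
    have hlt : u1 < u2 := g_strictMono hq0 hq1 hx hy hxy
    have hHx : funH q u1 = x := funH_g hq0 hq1 hx
    have hHy : funH q u2 = y := funH_g hq0 hq1 hy
    show funOmega q x / x < funOmega q y / y
    rw [div_lt_div_iff₀ (by linarith : (0:ℝ) < x) (by linarith : (0:ℝ) < y)]
    show u1 ^ q * y < u2 ^ q * x
    rw [← hHx, ← hHy]
    unfold funH
    have e1 : u1 ^ q = u1 ^ (q - 1) * u1 := by
      nth_rewrite 1 [show q = q - 1 + 1 by ring]
      rw [Real.rpow_add hp1, Real.rpow_one]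
    have e2 : u2 ^ q = u2 ^ (q - 1) * u2 := by
      nth_rewrite 1 [show q = q - 1 + 1 by ring]
      rw [Real.rpow_add hp2, Real.rpow_one]
    rw [e1, e2]
    have hB1 : (0:ℝ) < u1 ^ (q - 1) := Real.rpow_pos_of_pos hp1 _
    have hB2 : (0:ℝ) < u2 ^ (q - 1) := Real.rpow_pos_of_pos hp2 _
    nlinarith [mul_pos (mul_pos (mul_pos hq0 hB1) hB2) (sub_pos.2 hlt)]

end
end
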